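/- arXiv:0906.0440 — 8 statements merged into one kernel-verified Lean document; each statement's English description precedes it below -/
import Mathlib

section
/- Every irredundant r×s matrix M of non-negative integers satisfies a depth (2r−1) inequality, i.e. there is a positive integer q such that M^{2r} ≤ q·M^{2r−2} entrywise, where M^{2k} = (MM^t)^k. -/
open Matrix

/-- An irredundant matrix: a matrix of natural numbers in which
every row and every column is nonzero. -/
def Irredundant {I J : Type*} (M : Matrix I J ℕ) : Prop :=
  (∀ i, ∃ j, M i j ≠ 0) ∧ (∀ j, ∃ i, M i j ≠ 0)

/-- The even powers `M^{2k} = (M Mᵀ)^k` of a rectangular matrix. -/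
def evenPow {I J : Type*} [Fintype I] [Fintype J] [DecidableEq I]
    (M : Matrix I J ℕ) (k : ℕ) : Matrix I I ℕ :=
  (M * Mᵀ) ^ k

/-- The odd powers `M^{2k+1} = (M Mᵀ)^k M` of a rectangular matrix. -/
def oddPow {I J : Type*} [Fintype I] [Fintype J] [DecidableEq I]
    (M : Matrix I J ℕ) (k : ℕ) : Matrix I J ℕ :=
  (M * Mᵀ) ^ k * M

/-- The depth `n` inequality `M^{n+1} ≤ q • M^{n-1}` (entrywise), for `n ≥ 2`;
if `n = 2k+1` is odd both sides are even powers, if `n = 2k+2` is even both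
sides are odd powers. -/
def DepthIneq {I J : Type*} [Fintype I] [Fintype J] [DecidableEq I]
    (M : Matrix I J ℕ) (n q : ℕ) : Prop :=
  (∀ k, n = 2 * k + 1 → ∀ i i', evenPow M (k + 1) i i' ≤ q * evenPow M k i i') ∧
  (∀ k, n = 2 * k + 2 → ∀ i j, oddPow M (k + 1) i j ≤ q * oddPow M k i j)

theorem depthIneq_two_mul_rows_sub_one {r s : ℕ} (M : Matrix (Fin r) (Fin s) ℕ)
    (hM : Irredundant M) :
    ∃ q : ℕ, 0 < q ∧ ∀ i i', evenPow M r i i' ≤ q * evenPow M (r - 1) i i' := by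
  classical
  set S : Matrix (Fin r) (Fin r) ℕ := M * Mᵀ with hS
  -- the diagonal of S is positive
  have hdiag : ∀ i, 1 ≤ S i i := by
    intro i
    obtain ⟨j, hj⟩ := hM.1 i
    have h1 : 0 < M i j * M i j :=
      Nat.mul_pos (Nat.pos_of_ne_zero hj) (Nat.pos_of_ne_zero hj)
    have h2 : M i j * M i j ≤ ∑ j', M i j' * M i j' :=
      Finset.single_le_sum (f := fun j' => M i j' * M i j')
        (fun _ _ => Nat.zero_le _) (Finset.mem_univ j)
    have h3 : S i i = ∑ j', M i j' * M i j' := by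
      simp [hS, Matrix.mul_apply, Matrix.transpose_apply]
    omega
  -- entrywise monotonicity of powers of S
  have hmono : ∀ k i i', (S ^ k) i i' ≤ (S ^ (k + 1)) i i' := by
    intro k i i'
    have h1 : (S ^ (k + 1)) i i' = ∑ m, (S ^ k) i m * S m i' := by
      rw [pow_succ, Matrix.mul_apply]
    rw [h1]
    calc (S ^ k) i i' = (S ^ k) i i' * 1 := (mul_one _).symm
      _ ≤ (S ^ k) i i' * S i' i' := Nat.mul_le_mul_left _ (hdiag i')
      _ ≤ ∑ m, (S ^ k) i m * S m i' :=
          Finset.single_le_sum (f := fun m => (S ^ k) i m * S m i')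
            (fun _ _ => Nat.zero_le _) (Finset.mem_univ i')
  have hmono' : ∀ j k, j ≤ k → ∀ i i', (S ^ j) i i' ≤ (S ^ k) i i' := by
    intro j k hjk
    induction k with
    | zero =>
      intro i i'
      have : j = 0 := Nat.le_zero.mp hjk
      simp [this]
    | succ n ih =>
      intro i i'
      rcases Nat.lt_or_ge j (n + 1) with h | h
      · exact le_trans (ih (Nat.lt_succ_iff.mp h) i i') (hmono n i i')
      · have : j = n + 1 := le_antisymm hjk h
        simp [this]
  -- Cayley–Hamilton over ℤ: zero entries of S^(r-1) stay zero in S^r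
  have hzero : ∀ i i', (S ^ (r - 1)) i i' = 0 → (S ^ r) i i' = 0 := by
    intro i i' h0
    have hall : ∀ j, j < r → (S ^ j) i i' = 0 := by
      intro j hj
      have := hmono' j (r - 1) (by omega) i i'
      omega
    -- move to ℤ
    set T : Matrix (Fin r) (Fin r) ℤ := (Int.ofNatHom : ℕ →+* ℤ).mapMatrix S with hT
    have hTk : ∀ k, (T ^ k) i i' = ((S ^ k) i i' : ℤ) := by
      intro k
      have : T ^ k = (Int.ofNatHom : ℕ →+* ℤ).mapMatrix (S ^ k) := (map_pow _ _ _).symm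
      rw [this]
      rfl
    have hTall : ∀ j, j < r → (T ^ j) i i' = 0 := by
      intro j hj
      rw [hTk j, hall j hj]
      rfl
    have hch : Polynomial.aeval T T.charpoly = 0 := Matrix.aeval_self_charpoly T
    have hdeg : T.charpoly.natDegree = r := by
      rw [Matrix.charpoly_natDegree_eq_dim]
      simp
    have hsum : (0 : Matrix (Fin r) (Fin r) ℤ) =
        ∑ j ∈ Finset.range (r + 1), T.charpoly.coeff j • T ^ j := by
      rw [← hch, Polynomial.aeval_eq_sum_range, hdeg]
    have hentry : (0 : ℤ) = ∑ j ∈ Finset.range (r + 1),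
        T.charpoly.coeff j * (T ^ j) i i' := by
      have h1 := congrArg (fun A : Matrix (Fin r) (Fin r) ℤ => A i i') hsum
      simp only [Matrix.zero_apply, Matrix.sum_apply, Matrix.smul_apply,
        smul_eq_mul] at h1
      exact h1
    have hlead : T.charpoly.coeff r = 1 := by
      have hm := Matrix.charpoly_monic T
      have : T.charpoly.leadingCoeff = 1 := hm
      rwa [Polynomial.leadingCoeff, hdeg] at this
    have hTr : (T ^ r) i i' = 0 := by
      rw [Finset.sum_range_succ] at hentry
      have hrest : ∑ j ∈ Finset.range r, T.charpoly.coeff j * (T ^ j) i i' = 0 := by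
        apply Finset.sum_eq_zero
        intro j hj
        rw [hTall j (Finset.mem_range.mp hj), mul_zero]
      rw [hrest, zero_add, hlead, one_mul] at hentry
      omega
    have := hTk r
    rw [hTr] at this
    exact_mod_cast this.symm
  -- choose q
  refine ⟨(∑ i, ∑ i', (S ^ r) i i') + 1, Nat.succ_pos _, ?_⟩
  intro i i'
  show (S ^ r) i i' ≤ _ * (S ^ (r - 1)) i i'
  rcases Nat.eq_zero_or_pos ((S ^ (r - 1)) i i') with h | h
  · rw [hzero i i' h]
    exact Nat.zero_le _
  · calc (S ^ r) i i' ≤ ∑ i, ∑ i', (S ^ r) i i' := by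
          refine le_trans ?_ (Finset.single_le_sum (fun _ _ => Nat.zero_le _) (Finset.mem_univ i))
          exact Finset.single_le_sum (fun _ _ => Nat.zero_le _) (Finset.mem_univ i')
      _ ≤ (∑ i, ∑ i', (S ^ r) i i') + 1 := Nat.le_succ _
      _ ≤ ((∑ i, ∑ i', (S ^ r) i i') + 1) * (S ^ (r - 1)) i i' :=
          Nat.le_mul_of_pos_right _ h
end

section
/- Let M be an r×s and N a p×q irredundant non-negative integer matrix. If M satisfies a depth n inequality (M^{n+1} ≤ q₁M^{n-1}) and N satisfies a depth m inequality with m ≤ n, then the Kronecker (tensor) product M⊗N satisfies a depth n inequality: (M⊗N)^{n+1} ≤ q·(M⊗N)^{n-1} for some positive integer q. In particular, the depth of M⊗N is at most max(depth M, depth N). -/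
open Matrix

open Kronecker


/-- Entrywise inequality is preserved by right multiplication. -/
lemma mul_le_of_le {I J K : Type*} [Fintype J]
    {A B : Matrix I J ℕ} {q : ℕ} (h : ∀ i j, A i j ≤ q * B i j)
    (C : Matrix J K ℕ) : ∀ i k, (A * C) i k ≤ q * ((B * C) i k) := by
  intro i k
  simp only [Matrix.mul_apply, Finset.mul_sum]
  exact Finset.sum_le_sum fun j _ =>
    by rw [← mul_assoc]; exact Nat.mul_le_mul_right _ (h i j)

lemma evenPow_succ_eq {I J : Type*} [Fintype I] [Fintype J] [DecidableEq I]
    (M : Matrix I J ℕ) (k : ℕ) : evenPow M (k + 1) = oddPow M k * Mᵀ := by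
  simp [evenPow, oddPow, pow_succ, Matrix.mul_assoc]

lemma oddPow_eq {I J : Type*} [Fintype I] [Fintype J] [DecidableEq I]
    (M : Matrix I J ℕ) (k : ℕ) : oddPow M k = evenPow M k * M := rfl

/-- Depth n inequality implies depth (n+1) inequality. -/
lemma depthIneq_succ {I J : Type*} [Fintype I] [Fintype J] [DecidableEq I]
    {M : Matrix I J ℕ} {n q : ℕ} (hn : 2 ≤ n) (h : DepthIneq M n q) :
    DepthIneq M (n + 1) q := by
  constructor
  · intro k hk i i'
    obtain ⟨k', rfl⟩ : ∃ k', k = k' + 1 := by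
      cases k with
      | zero => omega
      | succ k' => exact ⟨k', rfl⟩
    have := h.2 k' (by omega)
    rw [evenPow_succ_eq, evenPow_succ_eq]
    exact mul_le_of_le this Mᵀ i i'
  · intro k hk i j
    have := h.1 k (by omega)
    rw [oddPow_eq, oddPow_eq]
    exact mul_le_of_le this M i j

lemma depthIneq_mono {I J : Type*} [Fintype I] [Fintype J] [DecidableEq I]
    {M : Matrix I J ℕ} {m n q : ℕ} (hm : 2 ≤ m) (hmn : m ≤ n)
    (h : DepthIneq M m q) : DepthIneq M n q := by
  induction n with
  | zero => omega
  | succ n ih =>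
    rcases Nat.lt_or_ge m (n + 1) with hlt | hge
    · exact depthIneq_succ (by omega) (ih (by omega))
    · have : m = n + 1 := by omega
      subst this; exact h

lemma kronecker_pow {r s p t : ℕ} (M : Matrix (Fin r) (Fin s) ℕ)
    (N : Matrix (Fin p) (Fin t) ℕ) (k : ℕ) :
    ((M ⊗ₖ N) * (M ⊗ₖ N)ᵀ) ^ k = ((M * Mᵀ) ^ k) ⊗ₖ ((N * Nᵀ) ^ k) := by
  induction k with
  | zero => simp [Matrix.one_kronecker_one]
  | succ k ih =>
    rw [pow_succ, pow_succ, pow_succ, ih, ← Matrix.kroneckerMap_transpose,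
      Matrix.mul_kronecker_mul, Matrix.mul_kronecker_mul]

lemma evenPow_kronecker {r s p t : ℕ} (M : Matrix (Fin r) (Fin s) ℕ)
    (N : Matrix (Fin p) (Fin t) ℕ) (k : ℕ) :
    evenPow (M ⊗ₖ N) k = (evenPow M k) ⊗ₖ (evenPow N k) :=
  kronecker_pow M N k

lemma oddPow_kronecker {r s p t : ℕ} (M : Matrix (Fin r) (Fin s) ℕ)
    (N : Matrix (Fin p) (Fin t) ℕ) (k : ℕ) :
    oddPow (M ⊗ₖ N) k = (oddPow M k) ⊗ₖ (oddPow N k) := by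
  rw [oddPow, oddPow, oddPow, kronecker_pow, Matrix.mul_kronecker_mul]

theorem depthIneq_kronecker {r s p t : ℕ}
    (M : Matrix (Fin r) (Fin s) ℕ) (N : Matrix (Fin p) (Fin t) ℕ)
    (hM : Irredundant M) (hN : Irredundant N)
    (n m : ℕ) (hm : 2 ≤ m) (hmn : m ≤ n)
    (q₁ q₂ : ℕ) (hq₁ : 0 < q₁) (hq₂ : 0 < q₂)
    (h₁ : DepthIneq M n q₁) (h₂ : DepthIneq N m q₂) :
    ∃ q : ℕ, 0 < q ∧ DepthIneq (M ⊗ₖ N) n q := by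
  have h₂' : DepthIneq N n q₂ := depthIneq_mono hm hmn h₂
  refine ⟨q₁ * q₂, Nat.mul_pos hq₁ hq₂, ?_, ?_⟩
  · intro k hk i i'
    rw [evenPow_kronecker, evenPow_kronecker]
    simp only [Matrix.kroneckerMap_apply]
    calc evenPow M (k+1) i.1 i'.1 * evenPow N (k+1) i.2 i'.2
        ≤ (q₁ * evenPow M k i.1 i'.1) * (q₂ * evenPow N k i.2 i'.2) :=
          Nat.mul_le_mul (h₁.1 k hk i.1 i'.1) (h₂'.1 k hk i.2 i'.2)
      _ = q₁ * q₂ * (evenPow M k i.1 i'.1 * evenPow N k i.2 i'.2) := by ring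
  · intro k hk i j
    rw [oddPow_kronecker, oddPow_kronecker]
    simp only [Matrix.kroneckerMap_apply]
    calc oddPow M (k+1) i.1 j.1 * oddPow N (k+1) i.2 j.2
        ≤ (q₁ * oddPow M k i.1 j.1) * (q₂ * oddPow N k i.2 j.2) :=
          Nat.mul_le_mul (h₁.2 k hk i.1 j.1) (h₂'.2 k hk i.2 j.2)
      _ = q₁ * q₂ * (oddPow M k i.1 j.1 * oddPow N k i.2 j.2) := by ring
end

section
/- If an irredundant non-negative integer matrix M satisfies a depth n inequality M^{n+1} ≤ q·M^{n-1}, then its transpose M^t satisfies a depth (n+1) inequality: (M^t)^{n+2} ≤ q·(M^t)^n. Moreover, if n is even, then M^t satisfies the depth n inequality (M^t)^{n+1} ≤ q·(M^t)^{n-1}. -/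
open Matrix

private lemma pow_mul_transpose {r s : ℕ} (M : Matrix (Fin r) (Fin s) ℕ) (k : ℕ) :
    (Mᵀ * M) ^ k * Mᵀ = Mᵀ * (M * Mᵀ) ^ k := by
  induction k with
  | zero => simp
  | succ k ih =>
    calc (Mᵀ * M) ^ (k + 1) * Mᵀ = (Mᵀ * M) * ((Mᵀ * M) ^ k * Mᵀ) := by
          rw [pow_succ', Matrix.mul_assoc]
      _ = Mᵀ * (M * (Mᵀ * (M * Mᵀ) ^ k)) := by rw [ih, Matrix.mul_assoc]
      _ = Mᵀ * (M * Mᵀ) ^ (k + 1) := by rw [← Matrix.mul_assoc M, pow_succ', Matrix.mul_assoc]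

private lemma oddPow_transpose {r s : ℕ} (M : Matrix (Fin r) (Fin s) ℕ) (k : ℕ) :
    oddPow Mᵀ k = Mᵀ * (M * Mᵀ) ^ k := by
  rw [oddPow, transpose_transpose, pow_mul_transpose]

private lemma evenPow_transpose_succ {r s : ℕ} (M : Matrix (Fin r) (Fin s) ℕ) (k : ℕ) :
    evenPow Mᵀ (k + 1) = Mᵀ * ((M * Mᵀ) ^ k * M) := by
  rw [evenPow, transpose_transpose, pow_succ, ← Matrix.mul_assoc, pow_mul_transpose, Matrix.mul_assoc]

private lemma mul_mono {r s t : ℕ} (M : Matrix (Fin r) (Fin s) ℕ)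
    {A B : Matrix (Fin r) (Fin t) ℕ} {q : ℕ}
    (hAB : ∀ i j, A i j ≤ q * B i j) (i : Fin s) (j : Fin t) :
    (Mᵀ * A) i j ≤ q * ((Mᵀ * B) i j) := by
  simp only [Matrix.mul_apply, Finset.mul_sum]
  apply Finset.sum_le_sum
  intro l _
  calc Mᵀ i l * A l j ≤ Mᵀ i l * (q * B l j) :=
        Nat.mul_le_mul_left _ (hAB l j)
    _ = q * (Mᵀ i l * B l j) := by ring

theorem depthIneq_transpose {r s : ℕ} (M : Matrix (Fin r) (Fin s) ℕ)
    (hM : Irredundant M) (n : ℕ) (hn : 2 ≤ n) (q : ℕ) (hq : 0 < q)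
    (h : DepthIneq M n q) :
    DepthIneq Mᵀ (n + 1) q ∧ (Even n → DepthIneq Mᵀ n q) := by
  obtain ⟨h1, h2⟩ := h
  constructor
  · constructor
    · -- n + 1 = 2k + 1, so n = 2k is even, k ≥ 1
      rintro k hk i i'
      obtain ⟨k, rfl⟩ : ∃ m, k = m + 1 := by
        rcases k with _ | k
        · omega
        · exact ⟨k, rfl⟩
      have hn' : n = 2 * k + 2 := by omega
      have := h2 k hn'
      rw [evenPow_transpose_succ, evenPow_transpose_succ]
      exact mul_mono M (fun i j => this i j) i i'
    · -- n + 1 = 2k + 2, so n = 2k + 1 is odd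
      rintro k hk i j
      have hn' : n = 2 * k + 1 := by omega
      have := h1 k hn'
      rw [oddPow_transpose, oddPow_transpose]
      exact mul_mono M (fun i j => this i j) i j
  · rintro hev
    constructor
    · rintro k hk
      exfalso
      obtain ⟨m, hm⟩ := hev
      omega
    · rintro k hk i j
      have := h2 k hk
      rw [oddPow_transpose, oddPow_transpose]
      have key : ∀ m, Mᵀ * (M * Mᵀ) ^ m = ((M * Mᵀ) ^ m * M)ᵀ := by
        intro m
        rw [transpose_mul, transpose_pow, transpose_mul, transpose_transpose]
      rw [key, key]
      exact this j i
end

section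
/- Let H be a subgroup of a finite group G and suppose two elements of H that are conjugate in G are always conjugate in H. Let T: CF(H) → CF(H) be the induction-restriction map χ ↦ (χ↑G)↓_H on complex class functions. Then T is surjective (equivalently, all eigenvalues of T on CF(H) are nonzero), and the nonzero eigenvalues of T are exactly the numbers (|G|/|H|)·(|C ∩ H|/|C|) for conjugacy classes C of G meeting H, with eigenvectors the characteristic functions of C ∩ H. -/
open scoped Classical

variable {G : Type*}

/-- Induction of a class function from a subgroup `H` of a finite group `G`. -/
noncomputable def indCF [Group G] [Fintype G] (H : Subgroup G) [Fintype H]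
    (f : H → ℂ) : G → ℂ :=
  fun g => (Nat.card H : ℂ)⁻¹ *
    ∑ x : G, if hx : x⁻¹ * g * x ∈ H then f ⟨x⁻¹ * g * x, hx⟩ else 0

/-- The induction-restriction operator `T : CF(H) → CF(H)`,
`χ ↦ (χ↑G)↓_H`. -/
noncomputable def Tcf [Group G] [Fintype G] (H : Subgroup G) [Fintype H]
    (f : H → ℂ) : H → ℂ :=
  fun h => indCF H f ↑h

/-- A class function on a finite group. -/
def IsClassFun {X : Type*} [Group X] (f : X → ℂ) : Prop :=
  ∀ x y : X, f (x * y * x⁻¹) = f y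

/-- The scalar `(|G|/|H|)·(|C∩H|/|C|)` attached to the `G`-conjugacy class
`C` of an element `c`. -/
noncomputable def eigval [Group G] [Fintype G] (H : Subgroup G) (c : G) : ℂ :=
  ((Nat.card G : ℂ) * (Nat.card {x : G // IsConj c x ∧ x ∈ H} : ℂ)) /
    ((Nat.card H : ℂ) * (Nat.card {x : G // IsConj c x} : ℂ))


section AuxiliaryLemmas
variable [Group G] [Fintype G]

lemma conj_fiber_card (h w : G) :
    (Finset.univ.filter fun x : G => x⁻¹ * h * x = w⁻¹ * h * w).card
      = (Finset.univ.filter fun y : G => y⁻¹ * h * y = h).card := by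
  apply Finset.card_bij' (fun x _ => x * w⁻¹) (fun y _ => y * w)
  · intro x hx
    simp only [Finset.mem_filter, Finset.mem_univ, true_and] at hx ⊢
    rw [mul_inv_rev, inv_inv,
      show w * x⁻¹ * h * (x * w⁻¹) = w * (x⁻¹ * h * x) * w⁻¹ by group, hx]
    group
  · intro y hy
    simp only [Finset.mem_filter, Finset.mem_univ, true_and] at hy ⊢
    rw [mul_inv_rev,
      show w⁻¹ * y⁻¹ * h * (y * w) = w⁻¹ * (y⁻¹ * h * y) * w by group, hy]
  · intro x _; group
  · intro y _; group

lemma count_eq (h : G) (p : G → Prop) :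
    (Finset.univ.filter fun x : G => p (x⁻¹ * h * x)).card
      = (Finset.univ.filter fun c : G => IsConj h c ∧ p c).card
        * (Finset.univ.filter fun y : G => y⁻¹ * h * y = h).card := by
  rw [Finset.card_eq_sum_card_fiberwise
      (f := fun x : G => x⁻¹ * h * x)
      (t := Finset.univ.filter fun c : G => IsConj h c ∧ p c)
      (by intro x hx
          simp only [Finset.mem_coe, Finset.mem_filter, Finset.mem_univ, true_and] at hx ⊢
          exact ⟨isConj_iff.mpr ⟨x⁻¹, by group⟩, hx⟩)]
  rw [Finset.sum_congr rfl (fun c hc => ?_), Finset.sum_const, smul_eq_mul]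
  simp only [Finset.mem_filter, Finset.mem_univ, true_and] at hc
  obtain ⟨u, hu⟩ := isConj_iff.mp hc.1
  have hpc := hc.2
  rw [Finset.filter_filter]
  have hc' : c = u⁻¹⁻¹ * h * u⁻¹ := by rw [inv_inv, ← hu]
  rw [Finset.filter_congr (fun x _ => by
    constructor
    · exact fun hx => hx.2
    · exact fun hx => ⟨hx ▸ hpc, hx⟩)]
  rw [hc']
  exact conj_fiber_card h u⁻¹

lemma eigval_eq (H : Subgroup G) [Fintype H] (h : H) :
    eigval H (↑h : G)
      = ((Finset.univ.filter fun x : G => x⁻¹ * ↑h * x ∈ H).card : ℂ)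
        / (Nat.card H : ℂ) := by
  have hG := count_eq (↑h : G) (fun _ => True)
  simp only [and_true, Finset.filter_true, Finset.card_univ] at hG
  have hS := count_eq (↑h : G) (fun x => x ∈ H)
  have hC0 : ((Finset.univ.filter fun c : G => IsConj (↑h : G) c).card : ℂ) ≠ 0 := by
    rw [Nat.cast_ne_zero, ← Nat.pos_iff_ne_zero, Finset.card_pos]
    exact ⟨↑h, by simpa using IsConj.refl (↑h : G)⟩
  have hH0 : ((Nat.card H : ℂ)) ≠ 0 := by
    rw [Nat.cast_ne_zero]
    exact Nat.card_pos.ne'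
  rw [eigval]
  rw [show Nat.card {x : G // IsConj (↑h : G) x ∧ x ∈ H}
      = (Finset.univ.filter fun c : G => IsConj (↑h : G) c ∧ c ∈ H).card by
    rw [Nat.card_eq_fintype_card, Fintype.card_subtype]]
  rw [show Nat.card {x : G // IsConj (↑h : G) x}
      = (Finset.univ.filter fun c : G => IsConj (↑h : G) c).card by
    rw [Nat.card_eq_fintype_card, Fintype.card_subtype]]
  rw [show (Nat.card G) = Fintype.card G from Nat.card_eq_fintype_card, hG, hS]
  push_cast
  rw [div_eq_div_iff (mul_ne_zero hH0 hC0) hH0]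
  ring

lemma eigval_ne_zero (H : Subgroup G) [Fintype H] (h : H) :
    eigval H (↑h : G) ≠ 0 := by
  rw [eigval]
  apply div_ne_zero <;> apply mul_ne_zero <;> rw [Nat.cast_ne_zero]
  · exact Nat.card_pos.ne'
  · have : Nonempty {x : G // IsConj (↑h : G) x ∧ x ∈ H} := ⟨⟨↑h, IsConj.refl _, h.2⟩⟩
    exact Nat.card_pos.ne'
  · exact Nat.card_pos.ne'
  · have : Nonempty {x : G // IsConj (↑h : G) x} := ⟨⟨↑h, IsConj.refl _⟩⟩
    exact Nat.card_pos.ne'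

lemma eigval_congr (H : Subgroup G) {c d : G} (hcd : IsConj c d) :
    eigval H c = eigval H d := by
  rw [eigval, eigval,
    Nat.card_congr (Equiv.subtypeEquivRight fun x =>
      and_congr_left' ⟨fun hx => hcd.symm.trans hx, fun hx => hcd.trans hx⟩),
    Nat.card_congr (Equiv.subtypeEquivRight fun x =>
      ⟨fun hx => hcd.symm.trans hx, fun hx => hcd.trans hx⟩)]

lemma isClassFun_eq {X : Type*} [Group X] {f : X → ℂ} (hf : IsClassFun f)
    {a b : X} (hab : IsConj a b) : f a = f b := by
  obtain ⟨c, hc⟩ := isConj_iff.mp hab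
  rw [← hc, hf]

lemma Tcf_apply (H : Subgroup G) [Fintype H] (f : H → ℂ) (h : H)
    (hf : ∀ (x : G) (hx : x⁻¹ * ↑h * x ∈ H), f ⟨x⁻¹ * ↑h * x, hx⟩ = f h) :
    Tcf H f h = eigval H (↑h : G) * f h := by
  rw [Tcf, indCF]
  rw [Finset.sum_congr rfl (fun x _ => show _ = if x⁻¹ * ↑h * x ∈ H then f h else 0 by
    by_cases hx : x⁻¹ * (↑h : G) * x ∈ H
    · rw [dif_pos hx, if_pos hx, hf]
    · rw [dif_neg hx, if_neg hx])]
  rw [← Finset.sum_filter, Finset.sum_const, nsmul_eq_mul, eigval_eq]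
  ring

end AuxiliaryLemmas

/-- If any two elements of `H` conjugate in `G` are already
conjugate in `H`, then the induction-restriction map `T` on class functions
of `H` is surjective, the characteristic function of `C ∩ H` (for `C` a
`G`-conjugacy class meeting `H`) is a nonzero eigenvector of `T` with
eigenvalue `(|G|/|H|)·(|C∩H|/|C|)`, and every nonzero eigenvalue of `T` on
class functions arises this way. -/
theorem T_surjective_and_eigenvalues [Group G] [Fintype G]
    (H : Subgroup G) [Fintype H]
    (hfus : ∀ x y : H, IsConj (x : G) (y : G) → IsConj x y) :
    (∀ f : H → ℂ, IsClassFun f → ∃ u : H → ℂ, IsClassFun u ∧ Tcf H u = f) ∧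
    (∀ c : G, (∃ h : H, IsConj c (h : G)) →
      (fun h : H => if IsConj c (h : G) then (1 : ℂ) else 0) ≠ 0 ∧
      Tcf H (fun h : H => if IsConj c (h : G) then (1 : ℂ) else 0) =
        fun h : H => eigval H c * (if IsConj c (h : G) then (1 : ℂ) else 0)) ∧
    (∀ μ : ℂ, μ ≠ 0 →
      (∃ f : H → ℂ, IsClassFun f ∧ f ≠ 0 ∧ Tcf H f = fun h => μ * f h) →
      ∃ c : G, (∃ h : H, IsConj c (h : G)) ∧ μ = eigval H c) := by
  have key : ∀ (h : H) (x : G) (hx : x⁻¹ * ↑h * x ∈ H),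
      IsConj (⟨x⁻¹ * ↑h * x, hx⟩ : H) h := by
    intro h x hx
    exact hfus _ _ (isConj_iff.mpr ⟨x, by group⟩)
  refine ⟨?_, ?_, ?_⟩
  · -- surjectivity
    intro f hf
    refine ⟨fun a => f a / eigval H ↑a, fun x y => ?_, ?_⟩
    · have h1 : IsConj y (x * y * x⁻¹) := isConj_iff.mpr ⟨x, rfl⟩
      have h2 : IsConj (↑y : G) (↑(x * y * x⁻¹) : G) := by
        push_cast
        exact isConj_iff.mpr ⟨↑x, rfl⟩
      show f (x * y * x⁻¹) / eigval H ↑(x * y * x⁻¹) = f y / eigval H ↑y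
      rw [isClassFun_eq hf h1.symm, eigval_congr H h2.symm]
    · funext a
      rw [Tcf_apply H _ a (fun x hx => ?_)]
      · rw [mul_comm, div_mul_cancel₀ _ (eigval_ne_zero H a)]
      · have h1 : IsConj (⟨x⁻¹ * ↑a * x, hx⟩ : H) a := key a x hx
        have h2 : IsConj ((⟨x⁻¹ * ↑a * x, hx⟩ : H) : G) (↑a : G) :=
          isConj_iff.mpr ⟨x, by group⟩
        rw [isClassFun_eq hf h1, eigval_congr H h2]
  · -- eigenvectors
    intro c ⟨h₀, hc₀⟩
    constructor
    · intro heq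
      have := congrFun heq h₀
      simp only [hc₀, if_true, Pi.zero_apply] at this
      exact one_ne_zero this
    · funext a
      rw [Tcf_apply H _ a (fun x hx => ?_)]
      · by_cases ha : IsConj c (↑a : G)
        · rw [eigval_congr H (ha.symm : IsConj (↑a : G) c)]
        · rw [if_neg ha, mul_zero, mul_zero]
      · have h2 : IsConj (x⁻¹ * ↑a * x) (↑a : G) := isConj_iff.mpr ⟨x, by group⟩
        simp only []
        congr 1
        simp only [eq_iff_iff]
        exact ⟨fun hx' => hx'.trans h2, fun hx' => hx'.trans h2.symm⟩
  · -- eigenvalues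
    intro μ hμ ⟨f, hf, hf0, hTf⟩
    obtain ⟨a, ha⟩ := Function.ne_iff.mp hf0
    have h1 : Tcf H f a = eigval H (↑a : G) * f a := by
      apply Tcf_apply H f a
      intro x hx
      exact isClassFun_eq hf (key a x hx)
    have h2 : Tcf H f a = μ * f a := congrFun hTf a
    refine ⟨↑a, ⟨a, IsConj.refl _⟩, ?_⟩
    have := h1.symm.trans h2
    exact (mul_right_cancel₀ ha this).symm
end

section
/- Let H ≤ G be finite groups such that the core of H in G is the intersection of m conjugates of H: there exist x_1 = 1, x_2, ..., x_m ∈ G with ⋂_{i=1}^m x_iHx_i^{-1} = core_G(H). Then for every irreducible character α of H and every β an irreducible constituent of α↓_N (where N = core_G(H)), the character Ind_N^H(β^z) (for a suitable z ∈ G normalizing the situation) is a constituent of T^{m-1}(α), where T(α) = (α↑G)↓_H. In particular (Mackey step): for any x ∈ G, Ind_{H∩xHx^{-1}}^H(Res_{H∩xHx^{-1}}^{xHx^{-1}}(α^x)) is a constituent of T(α) = Res_H^G(Ind_H^G(α)). -/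
set_option maxHeartbeats 1000000


open scoped Classical

variable {G : Type}

/-- Class functions on a subgroup `K ≤ G` are encoded as functions `G → ℂ`
vanishing off `K`; `resFn K f` is the restriction (extended by zero) of
`f : G → ℂ` to `K`. -/
noncomputable def resFn [Group G] (K : Subgroup G) (f : G → ℂ) : G → ℂ :=
  fun g => if g ∈ K then f g else 0

/-- Induction of a class function (encoded as a function `G → ℂ` vanishing
off `K`) from `K` to an intermediate subgroup `L` (take `L = ⊤` for
induction up to `G`). -/
noncomputable def indFn [Group G] [Fintype G] (K L : Subgroup G)
    (f : G → ℂ) : G → ℂ :=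
  fun g => if g ∈ L then
    (Nat.card K : ℂ)⁻¹ * ∑ y : G, (if y ∈ L then f (y⁻¹ * g * y) else 0)
  else 0

/-- The inner product of two class functions of `K` (encoded as functions on
`G` vanishing off `K`). -/
noncomputable def innerOn [Group G] [Fintype G] (K : Subgroup G)
    (f h : G → ℂ) : ℂ :=
  (Nat.card K : ℂ)⁻¹ * ∑ x : G, if x ∈ K then f x * (starRingEnd ℂ) (h x) else 0

/-- `f : G → ℂ` is the character of an irreducible representation of the
subgroup `K`, extended by zero off `K`. -/
noncomputable def IsIrrCharOn [Group G] (K : Subgroup G) (f : G → ℂ) : Prop :=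
  ∃ V : FDRep ℂ ↥K, CategoryTheory.Simple V ∧
    f = fun g => if hg : g ∈ K then V.character ⟨g, hg⟩ else 0

/-- `f : G → ℂ` is the character of a (not necessarily irreducible)
representation of the subgroup `K`, extended by zero off `K`. -/
noncomputable def IsCharOn [Group G] (K : Subgroup G) (f : G → ℂ) : Prop :=
  ∃ V : FDRep ℂ ↥K, f = fun g => if hg : g ∈ K then V.character ⟨g, hg⟩ else 0

/-- The induction-restriction operator `T(α) = (α↑G)↓_H` on class functions
of `H` encoded as functions on `G` vanishing off `H`. -/
noncomputable def Tfn [Group G] [Fintype G] (H : Subgroup G) (f : G → ℂ) :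
    G → ℂ :=
  resFn H (indFn H ⊤ f)

/-- The conjugate `f^z` of a class function, `(f^z)(g) = f(z⁻¹ g z)`. -/
noncomputable def conjFn [Group G] (z : G) (f : G → ℂ) : G → ℂ :=
  fun g => f (z⁻¹ * g * z)



open scoped Classical

noncomputable section Aux14

open LinearMap

variable {M : Type} [AddCommGroup M] [Module ℂ M] [FiniteDimensional ℂ M]

/-- trace of restriction to an invariant submodule equals trace of composition with a
projection onto it. -/
theorem trace_restrict_eq_trace_comp_proj (R : Submodule ℂ M) (p B : M →ₗ[ℂ] M)
    (hpR : ∀ m, p m ∈ R) (hfix : ∀ m ∈ R, p m = m) (hBR : ∀ m ∈ R, B m ∈ R) :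
    LinearMap.trace ℂ R (B.restrict hBR) = LinearMap.trace ℂ M (B ∘ₗ p) := by
  have h1 : B ∘ₗ p = (B ∘ₗ R.subtype) ∘ₗ (p.codRestrict R hpR) := by
    ext m; rfl
  rw [h1, LinearMap.trace_comp_comm']
  congr 1
  ext ⟨m, hm⟩
  have : B m ∈ R := hBR m hm
  simp [LinearMap.restrict_apply, LinearMap.codRestrict_apply, hfix _ this]

theorem trace_idem_eq_finrank (p : M →ₗ[ℂ] M) (hp : p ∘ₗ p = p) :
    LinearMap.trace ℂ M p = (Module.finrank ℂ (LinearMap.range p) : ℂ) := by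
  have hfix : ∀ m ∈ LinearMap.range p, p m = m := by
    rintro m ⟨x, rfl⟩
    exact congrFun (congrArg DFunLike.coe hp) x
  have hBR : ∀ m ∈ LinearMap.range p, LinearMap.id (R := ℂ) m ∈ LinearMap.range p := by
    intro m hm; simpa using hm
  have := trace_restrict_eq_trace_comp_proj (LinearMap.range p) p LinearMap.id
    (fun m => ⟨m, rfl⟩) hfix hBR
  rw [LinearMap.id_comp] at this
  rw [← this]
  have : LinearMap.id.restrict hBR = LinearMap.id := by
    ext x; rfl
  rw [this, LinearMap.trace_id]


theorem trace_pow_pred_conj (f : M →ₗ[ℂ] M) {n : ℕ} (hn : 0 < n) (hf : f ^ n = 1) :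
    LinearMap.trace ℂ M (f ^ (n - 1)) = (starRingEnd ℂ) (LinearMap.trace ℂ M f) := by
  have hn' : (n : ℂ) ≠ 0 := Nat.cast_ne_zero.2 hn.ne'
  set ζ : ℂ := Complex.exp (2 * Real.pi * Complex.I / n) with hζdef
  have hζ : IsPrimitiveRoot ζ n := Complex.isPrimitiveRoot_exp n hn.ne'
  set P : ℂ → (M →ₗ[ℂ] M) := fun lam => (n : ℂ)⁻¹ • ∑ k ∈ Finset.range n, lam⁻¹ ^ k • f ^ k
    with hPdef
  have hshift : ∀ lam : ℂ, lam ^ n = 1 → f * P lam = lam • P lam := by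
    intro lam hlam
    have hlam0 : lam ≠ 0 := by
      intro h; rw [h, zero_pow hn.ne'] at hlam; exact zero_ne_one hlam
    have hper : (∑ k ∈ Finset.range n, lam⁻¹ ^ (k + 1) • f ^ (k + 1))
        = ∑ k ∈ Finset.range n, lam⁻¹ ^ k • f ^ k := by
      have h1 := Finset.sum_range_succ' (fun k => lam⁻¹ ^ k • f ^ k) n
      have h2 := Finset.sum_range_succ (fun k => lam⁻¹ ^ k • f ^ k) n
      have h3 : lam⁻¹ ^ n • f ^ n = lam⁻¹ ^ 0 • f ^ 0 := by
        simp [hf, inv_pow, hlam]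
      have h4 := h1.symm.trans h2
      simp only [h3] at h4
      exact add_right_cancel h4
    have step1 : f * P lam = (n : ℂ)⁻¹ • ∑ k ∈ Finset.range n, lam⁻¹ ^ k • f ^ (k + 1) := by
      rw [hPdef]
      simp only [mul_smul_comm, Finset.mul_sum]
      congr 1
      refine Finset.sum_congr rfl fun k _ => ?_
      rw [← pow_succ']
    rw [step1]
    have hterm : ∀ k : ℕ, lam⁻¹ ^ k • f ^ (k + 1) = lam • lam⁻¹ ^ (k + 1) • f ^ (k + 1) := by
      intro k
      rw [smul_smul]
      congr 1
      rw [pow_succ, mul_comm (lam⁻¹ ^ k) lam⁻¹, ← mul_assoc, mul_inv_cancel₀ hlam0, one_mul]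
    simp only [hterm]
    rw [← Finset.smul_sum, hper, hPdef]
    simp only [smul_comm lam ((n : ℂ)⁻¹)]
    try rw [Finset.smul_sum]
  have hpow : ∀ (lam : ℂ), lam ^ n = 1 → ∀ k : ℕ, f ^ k * P lam = lam ^ k • P lam := by
    intro lam hlam k
    induction k with
    | zero => simp
    | succ k ih =>
      rw [pow_succ', mul_assoc, ih, mul_smul_comm, hshift lam hlam, smul_smul, ← pow_succ]
  have hexpand : ∀ (lam : ℂ) (Q : M →ₗ[ℂ] M),
      P lam * Q = (n : ℂ)⁻¹ • ∑ k ∈ Finset.range n, lam⁻¹ ^ k • (f ^ k * Q) := by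
    intro lam Q
    rw [hPdef]
    simp only [smul_mul_assoc, Finset.sum_mul]
  have hidem : ∀ lam : ℂ, lam ^ n = 1 → P lam ∘ₗ P lam = P lam := by
    intro lam hlam
    have hlam0 : lam ≠ 0 := by
      intro h; rw [h, zero_pow hn.ne'] at hlam; exact zero_ne_one hlam
    rw [← Module.End.mul_eq_comp, hexpand lam (P lam)]
    have hc : ∀ k ∈ Finset.range n, lam⁻¹ ^ k • (f ^ k * P lam) = P lam := by
      intro k _
      rw [hpow lam hlam k, smul_smul, inv_pow,
        inv_mul_cancel₀ (pow_ne_zero _ hlam0), one_smul]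
    rw [Finset.sum_congr rfl hc, Finset.sum_const, Finset.card_range,
      ← Nat.cast_smul_eq_nsmul ℂ, smul_smul, inv_mul_cancel₀ hn', one_smul]
  have hsumP : ∑ j ∈ Finset.range n, P (ζ ^ j) = 1 := by
    have h1 : ∀ j : ℕ, P (ζ ^ j) = (n : ℂ)⁻¹ • ∑ k ∈ Finset.range n,
        ((ζ⁻¹ ^ k) ^ j) • f ^ k := by
      intro j
      rw [hPdef]
      refine congrArg (fun t => (n : ℂ)⁻¹ • t) (Finset.sum_congr rfl fun k _ => ?_)
      refine congrArg (fun t => t • f ^ k) ?_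
      rw [← inv_pow, ← pow_mul, ← pow_mul, mul_comm k j]
    simp only [h1]
    rw [← Finset.smul_sum, Finset.sum_comm]
    have h2 : ∀ k ∈ Finset.range n,
        (∑ j ∈ Finset.range n, ((ζ⁻¹ ^ k) ^ j) • f ^ k)
          = (∑ j ∈ Finset.range n, (ζ⁻¹ ^ k) ^ j) • f ^ k := by
      intro k _; rw [Finset.sum_smul]
    have h2' : (∑ k ∈ Finset.range n, ∑ j ∈ Finset.range n, ((ζ⁻¹ ^ k) ^ j) • f ^ k)
        = ∑ k ∈ Finset.range n, (∑ j ∈ Finset.range n, (ζ⁻¹ ^ k) ^ j) • f ^ k :=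
      Finset.sum_congr rfl h2
    rw [h2']
    have h3 : ∀ k ∈ Finset.range n, k ≠ 0 → (∑ j ∈ Finset.range n, (ζ⁻¹ ^ k) ^ j) • f ^ k
        = (0 : M →ₗ[ℂ] M) := by
      intro k hk hk0
      have hμ : (ζ⁻¹ ^ k) ≠ 1 := by
        have := (hζ.inv).pow_ne_one_of_pos_of_lt hk0
          (Finset.mem_range.1 hk)
        exact this
      have hμn : (ζ⁻¹ ^ k) ^ n = 1 := by
        rw [← pow_mul, mul_comm, pow_mul, inv_pow, hζ.pow_eq_one, inv_one, one_pow]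
      rw [geom_sum_eq hμ, hμn, sub_self, zero_div, zero_smul]
    rw [Finset.sum_eq_single_of_mem 0 (Finset.mem_range.2 hn) h3]
    simp only [pow_zero, one_pow, Finset.sum_const, Finset.card_range, nsmul_eq_mul, mul_one,
      pow_zero]
    rw [smul_smul, inv_mul_cancel₀ hn', one_smul]
  -- the ranks
  have hidem' : ∀ j : ℕ, LinearMap.trace ℂ M (P (ζ ^ j))
      = (Module.finrank ℂ (LinearMap.range (P (ζ ^ j))) : ℂ) :=
    fun j => trace_idem_eq_finrank _ (hidem _ (by rw [← pow_mul, mul_comm, pow_mul, hζ.pow_eq_one, one_pow]))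
  have hζj : ∀ j : ℕ, (ζ ^ j) ^ n = 1 := by
    intro j; rw [← pow_mul, mul_comm, pow_mul, hζ.pow_eq_one, one_pow]
  have key : ∀ q : ℕ, LinearMap.trace ℂ M (f ^ q)
      = ∑ j ∈ Finset.range n, (ζ ^ j) ^ q *
          (Module.finrank ℂ (LinearMap.range (P (ζ ^ j))) : ℂ) := by
    intro q
    have : f ^ q = ∑ j ∈ Finset.range n, f ^ q * P (ζ ^ j) := by
      rw [← Finset.mul_sum, hsumP, mul_one]
    rw [this, map_sum]
    refine Finset.sum_congr rfl fun j _ => ?_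
    rw [hpow _ (hζj j) q, map_smul, smul_eq_mul, hidem' j]
  have habs : ∀ j : ℕ, (ζ ^ j) ^ (n - 1) = (starRingEnd ℂ) (ζ ^ j) := by
    intro j
    set μ := ζ ^ j with hμdef
    have hμn := hζj j
    rw [← hμdef] at hμn
    have hμ0 : μ ≠ 0 := by
      intro h; rw [h, zero_pow hn.ne'] at hμn; exact zero_ne_one hμn
    have habs1 : ‖μ‖ = 1 := by
      have hpown : ‖μ‖ ^ n = 1 := by
        rw [← norm_pow, hμn, norm_one]
      rcases lt_trichotomy (‖μ‖) 1 with h | h | h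
      · have := pow_lt_one₀ (norm_nonneg μ) h hn.ne'
        rw [hpown] at this; exact absurd this (lt_irrefl 1)
      · exact h
      · have := one_lt_pow₀ h hn.ne'
        rw [hpown] at this; exact absurd this (lt_irrefl 1)
    have hinv : μ⁻¹ = (starRingEnd ℂ) μ := Complex.inv_eq_conj habs1
    have : μ ^ (n - 1) = μ⁻¹ := by
      refine eq_inv_of_mul_eq_one_left ?_
      rw [← pow_succ, Nat.sub_add_cancel hn]
      exact hμn
    rw [this, hinv]
  have hfq : f ^ 1 = f := pow_one f
  rw [key (n - 1), ← hfq, key 1, map_sum]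
  refine Finset.sum_congr rfl fun j _ => ?_
  rw [map_mul, pow_one, habs j]
  congr 1
  rw [Complex.conj_natCast]


theorem trace_eq_sum_repr {W : Type} [AddCommGroup W] [Module ℂ W] {ι : Type}
    [Fintype ι] [DecidableEq ι] (b : Module.Basis ι ℂ W) (F : W →ₗ[ℂ] W) :
    LinearMap.trace ℂ W F = ∑ i, b.repr (F (b i)) i := by
  rw [LinearMap.trace_eq_matrix_trace ℂ b, Matrix.trace]
  simp [Matrix.diag, LinearMap.toMatrix_apply]

end Aux14

noncomputable section Mackey14

variable {G : Type} [Group G] [Fintype G]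
variable {W : Type} [AddCommGroup W] [Module ℂ W] [FiniteDimensional ℂ W]

open scoped Classical

/-- the character of `ρ`, as a function on `G` vanishing off `U`. -/
noncomputable def chiFn (U : Subgroup G) (ρ : Representation ℂ ↥U W) : G → ℂ :=
  fun g => if hg : g ∈ U then LinearMap.trace ℂ W (ρ ⟨g, hg⟩) else 0

theorem chiFn_supp (U : Subgroup G) (ρ : Representation ℂ ↥U W) {g : G} (hg : g ∉ U) :
    chiFn U ρ g = 0 := dif_neg hg

theorem chiFn_conj (U : Subgroup G) (ρ : Representation ℂ ↥U W) {u : G} (hu : u ∈ U) (g : G) :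
    chiFn U ρ (u * g * u⁻¹) = chiFn U ρ g := by
  by_cases hg : g ∈ U
  · have hmem : u * g * u⁻¹ ∈ U := mul_mem (mul_mem hu hg) (inv_mem hu)
    rw [chiFn, dif_pos hmem, chiFn, dif_pos hg]
    have he : (⟨u * g * u⁻¹, hmem⟩ : ↥U) = ⟨u, hu⟩ * ⟨g, hg⟩ * (⟨u, hu⟩)⁻¹ := by
      apply Subtype.ext; rfl
    have hsplit : ρ (⟨u, hu⟩ * ⟨g, hg⟩ * (⟨u, hu⟩)⁻¹)
        = ρ ⟨u, hu⟩ * ρ ⟨g, hg⟩ * ρ (⟨u, hu⟩)⁻¹ := by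
      rw [map_mul, map_mul]
    rw [he, hsplit, LinearMap.trace_mul_comm, ← mul_assoc, ← map_mul,
      inv_mul_cancel, map_one, one_mul]
  · have hmem : u * g * u⁻¹ ∉ U := by
      intro hmem
      have : u⁻¹ * (u * g * u⁻¹) * u ∈ U := mul_mem (mul_mem (inv_mem hu) hmem) hu
      simp only [mul_assoc, inv_mul_cancel, mul_one, inv_mul_cancel_left] at this
      exact hg this
    rw [chiFn, dif_neg hmem, chiFn, dif_neg hg]

variable (U H : Subgroup G) (ρ : Representation ℂ ↥U W) (S : Set G)

/-- The submodule of `U`-equivariant functions `G → W` vanishing off `S`. -/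
def mkSubmodule : Submodule ℂ (G → W) where
  carrier := {φ | (∀ (u : ↥U) (x : G), φ (↑u * x) = ρ u (φ x)) ∧ ∀ x, x ∉ S → φ x = 0}
  add_mem' := by
    intro a b ha hb
    refine ⟨fun u x => ?_, fun x hx => ?_⟩
    · simp [ha.1 u x, hb.1 u x]
    · simp [ha.2 x hx, hb.2 x hx]
  zero_mem' := by
    refine ⟨fun u x => by simp, fun x hx => rfl⟩
  smul_mem' := by
    intro c a ha
    refine ⟨fun u x => ?_, fun x hx => ?_⟩
    · simp [ha.1 u x]
    · simp [ha.2 x hx]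

/-- Right translation action. -/
def mkAct (a : G) : (G → W) →ₗ[ℂ] (G → W) where
  toFun φ := fun x => φ (x * a)
  map_add' _ _ := rfl
  map_smul' _ _ := rfl

@[simp] theorem mkAct_apply (a : G) (φ : G → W) (x : G) : mkAct a φ x = φ (x * a) := rfl

variable {U H S}

theorem mkAct_mem (hSr : ∀ h ∈ H, ∀ x : G, x * h ∈ S ↔ x ∈ S)
    {a : G} (ha : a ∈ H) {φ : G → W} (hφ : φ ∈ mkSubmodule U ρ S) :
    mkAct a φ ∈ mkSubmodule U ρ S := by
  refine ⟨fun u x => ?_, fun x hx => ?_⟩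
  · have := hφ.1 u (x * a)
    simpa [mul_assoc] using this
  · exact hφ.2 (x * a) fun hmem => hx ((hSr a ha x).1 hmem)

variable (U H S)

/-- The representation of `H` on `mkSubmodule` by right translation. -/
def mkRep (hSr : ∀ h ∈ H, ∀ x : G, x * h ∈ S ↔ x ∈ S) :
    Representation ℂ ↥H ↥(mkSubmodule U ρ S) where
  toFun a := (mkAct (a : G)).restrict (fun φ hφ => mkAct_mem ρ hSr a.2 hφ)
  map_one' := by
    apply LinearMap.ext; intro φ
    apply Subtype.ext
    funext x
    simp [LinearMap.restrict_apply]
  map_mul' a b := by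
    apply LinearMap.ext; intro φ
    apply Subtype.ext
    funext x
    simp [LinearMap.restrict_apply, mul_assoc]

@[simp] theorem mkRep_apply (hSr : ∀ h ∈ H, ∀ x : G, x * h ∈ S ↔ x ∈ S) (a : ↥H)
    (φ : ↥(mkSubmodule U ρ S)) (x : G) :
    ((mkRep U H ρ S hSr a) φ : G → W) x = (φ : G → W) (x * (a : G)) := rfl

/-- The averaging projection onto `mkSubmodule`. -/
def mkProj : (G → W) →ₗ[ℂ] (G → W) where
  toFun φ := fun x => if x ∈ S then
    (Nat.card ↥U : ℂ)⁻¹ • ∑ u : ↥U, ρ u⁻¹ (φ (↑u * x)) else 0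
  map_add' a b := by
    funext x
    by_cases hx : x ∈ S <;>
      simp [hx, Finset.sum_add_distrib, smul_add]
  map_smul' c a := by
    funext x
    by_cases hx : x ∈ S <;>
      simp [hx, Finset.smul_sum, smul_comm c]

@[simp] theorem mkProj_apply (φ : G → W) (x : G) :
    mkProj U ρ S φ x = (if x ∈ S then
      (Nat.card ↥U : ℂ)⁻¹ • ∑ u : ↥U, ρ u⁻¹ (φ (↑u * x)) else 0) := rfl

variable {U H S}

theorem mkProj_mem (hSl : ∀ u ∈ U, ∀ x : G, u * x ∈ S ↔ x ∈ S) (φ : G → W) :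
    mkProj U ρ S φ ∈ mkSubmodule U ρ S := by
  refine ⟨fun u₀ x => ?_, fun x hx => if_neg hx⟩
  by_cases hx : x ∈ S
  · have hx' : (↑u₀ : G) * x ∈ S := (hSl _ u₀.2 x).2 hx
    rw [mkProj_apply, mkProj_apply, if_pos hx', if_pos hx, map_smul, map_sum]
    congr 1
    refine Fintype.sum_equiv (Equiv.mulRight u₀) _ _ fun v => ?_
    simp only [Equiv.coe_mulRight]
    have h1 : ((v * u₀ : ↥U) : G) * x = (v : G) * ((u₀ : G) * x) := by
      push_cast
      group
    rw [h1, ← Module.End.mul_apply, ← map_mul]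
    have h2 : u₀ * (v * u₀)⁻¹ = v⁻¹ := by group
    rw [h2]
  · have hx' : (↑u₀ : G) * x ∉ S := fun h => hx ((hSl _ u₀.2 x).1 h)
    rw [mkProj_apply, mkProj_apply, if_neg hx', if_neg hx, map_zero]

theorem mkProj_fix {φ : G → W} (hφ : φ ∈ mkSubmodule U ρ S) : mkProj U ρ S φ = φ := by
  funext x
  by_cases hx : x ∈ S
  · rw [mkProj_apply, if_pos hx]
    have h1 : ∀ u : ↥U, ρ u⁻¹ (φ (↑u * x)) = φ x := by
      intro u
      rw [hφ.1 u x, ← Module.End.mul_apply, ← map_mul, inv_mul_cancel, map_one,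
        Module.End.one_apply]
    rw [Finset.sum_congr rfl fun u _ => h1 u, Finset.sum_const, Finset.card_univ,
      ← Nat.card_eq_fintype_card, ← Nat.cast_smul_eq_nsmul ℂ, smul_smul,
      inv_mul_cancel₀, one_smul]
    exact Nat.cast_ne_zero.2 Nat.card_pos.ne'
  · rw [mkProj_apply, if_neg hx]
    exact (hφ.2 x hx).symm

theorem mkProj_comm (hSr : ∀ h ∈ H, ∀ x : G, x * h ∈ S ↔ x ∈ S) {a : G} (ha : a ∈ H) :
    (mkAct a) ∘ₗ (mkProj U ρ S) = (mkProj U ρ S) ∘ₗ (mkAct (W := W) a) := by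
  apply LinearMap.ext; intro φ
  funext x
  simp only [LinearMap.comp_apply, mkAct_apply, mkProj_apply]
  rw [if_congr (hSr a ha x) rfl rfl]
  by_cases hx : x ∈ S
  · rw [if_pos hx, if_pos hx]
    simp [mul_assoc]
  · rw [if_neg hx, if_neg hx]


theorem mkRep_trace (hSl : ∀ u ∈ U, ∀ x : G, u * x ∈ S ↔ x ∈ S)
    (hSr : ∀ h ∈ H, ∀ x : G, x * h ∈ S ↔ x ∈ S) (a : ↥H) :
    LinearMap.trace ℂ _ (mkRep U H ρ S hSr a)
      = (Nat.card ↥U : ℂ)⁻¹ *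
          ∑ x : G, (if x ∈ S then chiFn U ρ (x * (a : G) * x⁻¹) else 0) := by
  classical
  set c : ℂ := (Nat.card ↥U : ℂ)⁻¹ with hc
  have h0 : LinearMap.trace ℂ _ (mkRep U H ρ S hSr a)
      = LinearMap.trace ℂ _ ((mkAct ((a : G))) ∘ₗ mkProj U ρ S) := by
    have hrfl : mkRep U H ρ S hSr a
        = (mkAct ((a : G))).restrict (fun φ hφ => mkAct_mem ρ hSr a.2 hφ) := rfl
    rw [hrfl]
    exact trace_restrict_eq_trace_comp_proj (mkSubmodule U ρ S) (mkProj U ρ S)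
      (mkAct ((a : G))) (mkProj_mem ρ hSl) (fun m hm => mkProj_fix ρ hm) _
  rw [h0]
  set b := Module.finBasis ℂ W with hb
  set BB : Module.Basis ((_ : G) × (Fin (Module.finrank ℂ W))) ℂ (G → W) :=
    Pi.basis (fun _ : G => b) with hBB
  rw [trace_eq_sum_repr BB, ← Finset.univ_sigma_univ, Finset.sum_sigma]
  rw [Finset.mul_sum]
  refine Finset.sum_congr rfl fun x _ => ?_
  -- evaluate the inner sum over the basis of W
  set w : G := x * (a : G)⁻¹ * x⁻¹ with hw
  have hwinv : w⁻¹ = x * (a : G) * x⁻¹ := by rw [hw]; group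
  have heval : ∀ i : Fin (Module.finrank ℂ W),
      ((mkAct ((a : G))) ∘ₗ mkProj U ρ S) (BB ⟨x, i⟩) x
        = if (x * (a : G)) ∈ S then
            c • (if hwU : w ∈ U then ρ (⟨w, hwU⟩)⁻¹ (b i) else 0) else 0 := by
    intro i
    have hsingle : BB ⟨x, i⟩ = Pi.single x (b i) := by
      rw [hBB, Pi.basis_apply]
    rw [hsingle]
    simp only [LinearMap.comp_apply, mkAct_apply, mkProj_apply]
    refine if_congr Iff.rfl ?_ rfl
    congr 1
    have hterm : ∀ u : ↥U, (Pi.single x (b i) : G → W) ((u : G) * (x * (a : G)))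
        = if (u : G) = w then b i else 0 := by
      intro u
      rw [Pi.single_apply]
      refine if_congr ?_ rfl rfl
      constructor
      · intro h
        have := eq_mul_inv_of_mul_eq h
        rw [this, mul_inv_rev, ← mul_assoc, hw]
      · intro h
        rw [h, hw]
        group
    have : (∑ u : ↥U, ρ u⁻¹ ((Pi.single x (b i) : G → W) ((u : G) * (x * (a : G)))))
        = ∑ u : ↥U, ρ u⁻¹ (if (u : G) = w then b i else 0) := by
      refine Finset.sum_congr rfl fun u _ => ?_
      rw [hterm u]
    rw [this]
    by_cases hwU : w ∈ U
    · rw [dif_pos hwU]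
      trans (ρ ((⟨w, hwU⟩ : ↥U))⁻¹ (if (((⟨w, hwU⟩ : ↥U) : G)) = w then b i else 0))
      · exact Finset.sum_eq_single _
          (fun u _ hu => by rw [if_neg fun hc' => hu (Subtype.ext hc'), map_zero])
          (fun h => absurd (Finset.mem_univ _) h)
      · rw [if_pos rfl]
    · rw [dif_neg hwU]
      refine Finset.sum_eq_zero fun u _ => ?_
      rw [if_neg (fun (hc' : (u : G) = w) => hwU (hc' ▸ u.2)), map_zero]
  have hrepr : ∀ i : Fin (Module.finrank ℂ W),
      BB.repr (((mkAct ((a : G))) ∘ₗ mkProj U ρ S) (BB ⟨x, i⟩)) ⟨x, i⟩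
        = b.repr ((((mkAct ((a : G))) ∘ₗ mkProj U ρ S) (BB ⟨x, i⟩)) x) i := by
    intro i
    rw [hBB, Pi.basis_repr]
  rw [Finset.sum_congr rfl fun i _ => hrepr i]
  rw [Finset.sum_congr rfl fun i _ => congrArg (fun t => b.repr t i) (heval i)]
  have hSiff : (x * (a : G) ∈ S) ↔ (x ∈ S) := hSr _ a.2 x
  by_cases hxS : x ∈ S
  · rw [if_pos hxS]
    have hxS' : x * (a : G) ∈ S := hSiff.2 hxS
    simp only [if_pos hxS']
    by_cases hwU : w ∈ U
    · simp only [dif_pos hwU]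
      have hrw : ∀ i : Fin (Module.finrank ℂ W),
          b.repr (c • ρ (⟨w, hwU⟩)⁻¹ (b i)) i = c * b.repr (ρ (⟨w, hwU⟩)⁻¹ (b i)) i := by
        intro i
        rw [map_smul, Finsupp.smul_apply, smul_eq_mul]
      rw [Finset.sum_congr rfl fun i _ => hrw i, ← Finset.mul_sum,
        ← trace_eq_sum_repr b]
      have hwU' : x * (a : G) * x⁻¹ ∈ U := by
        rw [← hwinv]; exact inv_mem hwU
      have hchi : chiFn U ρ (x * (a : G) * x⁻¹)
          = LinearMap.trace ℂ W (ρ ⟨x * (a : G) * x⁻¹, hwU'⟩) := dif_pos hwU'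
      rw [hchi]
      have : (⟨w, hwU⟩ : ↥U)⁻¹ = ⟨x * (a : G) * x⁻¹, hwU'⟩ := by
        apply Subtype.ext
        exact hwinv
      rw [this]
    · simp only [dif_neg hwU, smul_zero, map_zero, Finsupp.coe_zero, Pi.zero_apply,
        Finset.sum_const_zero]
      have hnot : x * (a : G) * x⁻¹ ∉ U := by
        rw [← hwinv]
        intro hmem
        exact hwU (by simpa using inv_mem hmem)
      rw [chiFn, dif_neg hnot, mul_zero]
  · rw [if_neg hxS, mul_zero]
    have hxS' : x * (a : G) ∉ S := fun h => hxS (hSiff.1 h)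
    simp only [if_neg hxS', map_zero, Finsupp.coe_zero, Pi.zero_apply, Finset.sum_const_zero]

end Mackey14

noncomputable section Bridge14

variable {G : Type} [Group G] [Fintype G]
variable {W : Type} [AddCommGroup W] [Module ℂ W] [FiniteDimensional ℂ W]

open scoped Classical

theorem sum_ite_mem_subgroup (U : Subgroup G) (f : G → ℂ) :
    (∑ y : G, if y ∈ U then f y else 0) = ∑ u : ↥U, f ↑u := by
  rw [← Finset.sum_filter, ← Finset.sum_coe_sort]
  exact Fintype.sum_equiv (Equiv.subtypeEquivRight (by simp)) _ _ (fun x => rfl)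

theorem sum_inv_reindex (F : G → ℂ) : (∑ x : G, F x) = ∑ x : G, F x⁻¹ :=
  Fintype.sum_equiv (Equiv.inv G) _ _ fun x => by simp

/-- Functions of "Mackey character" shape. -/
noncomputable def mkCharFn (U H : Subgroup G) (ρ : Representation ℂ ↥U W) (S : Set G) :
    G → ℂ :=
  fun g => if g ∈ H then
    (Nat.card ↥U : ℂ)⁻¹ * ∑ x : G, (if x ∈ S then chiFn U ρ (x * g * x⁻¹) else 0)
  else 0

theorem isCharOn_mkCharFn (U H : Subgroup G) (ρ : Representation ℂ ↥U W) (S : Set G)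
    (hSl : ∀ u ∈ U, ∀ x : G, u * x ∈ S ↔ x ∈ S)
    (hSr : ∀ h ∈ H, ∀ x : G, x * h ∈ S ↔ x ∈ S) :
    IsCharOn H (mkCharFn U H ρ S) := by
  refine ⟨FDRep.of (mkRep U H ρ S hSr), ?_⟩
  funext g
  by_cases hg : g ∈ H
  · rw [mkCharFn, if_pos hg, dif_pos hg]
    have := mkRep_trace ρ hSl hSr ⟨g, hg⟩
    rw [← this]
    rfl
  · rw [mkCharFn, if_neg hg, dif_neg hg]

theorem resFn_indFn_top_eq (U H : Subgroup G) (ρ : Representation ℂ ↥U W) :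
    resFn H (indFn U ⊤ (chiFn U ρ)) = mkCharFn U H ρ Set.univ := by
  funext g
  rw [resFn, mkCharFn]
  by_cases hg : g ∈ H
  · rw [if_pos hg, if_pos hg, indFn, if_pos (Subgroup.mem_top g)]
    congr 1
    simp only [Subgroup.mem_top, if_true, Set.mem_univ]
    rw [sum_inv_reindex (fun y => chiFn U ρ (y⁻¹ * g * y))]
    refine Finset.sum_congr rfl fun y _ => ?_
    rw [inv_inv]
  · rw [if_neg hg, if_neg hg]

theorem indFn_eq_mkCharFn (U H : Subgroup G) (ρ : Representation ℂ ↥U W) :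
    indFn U H (chiFn U ρ) = mkCharFn U H ρ ↑H := by
  funext g
  rw [indFn, mkCharFn]
  by_cases hg : g ∈ H
  · rw [if_pos hg, if_pos hg]
    congr 1
    rw [sum_inv_reindex (fun y => if y ∈ H then chiFn U ρ (y⁻¹ * g * y) else 0)]
    refine Finset.sum_congr rfl fun y _ => ?_
    have : y⁻¹ ∈ H ↔ y ∈ (H : Set G) := by simp
    rw [if_congr this rfl rfl, inv_inv]
  · rw [if_neg hg, if_neg hg]

/-- The "inverse double coset" `U v⁻¹ H` as a set. -/
def dosetInv (U H : Subgroup G) (v : G) : Set G :=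
  {x : G | ∃ u h : G, u ∈ U ∧ h ∈ H ∧ x = u * v⁻¹ * h}

theorem dosetInv_left (U H : Subgroup G) (v : G) :
    ∀ u ∈ U, ∀ x : G, u * x ∈ dosetInv U H v ↔ x ∈ dosetInv U H v := by
  intro u hu x
  constructor
  · rintro ⟨u', h', hu', hh', he⟩
    refine ⟨u⁻¹ * u', h', mul_mem (inv_mem hu) hu', hh', ?_⟩
    have : x = u⁻¹ * (u * x) := by group
    rw [this, he]; group
  · rintro ⟨u', h', hu', hh', he⟩
    exact ⟨u * u', h', mul_mem hu hu', hh', by rw [he]; group⟩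

theorem dosetInv_right (U H : Subgroup G) (v : G) :
    ∀ h ∈ H, ∀ x : G, x * h ∈ dosetInv U H v ↔ x ∈ dosetInv U H v := by
  intro h hh x
  constructor
  · rintro ⟨u', h', hu', hh', he⟩
    refine ⟨u', h' * h⁻¹, hu', mul_mem hh' (inv_mem hh), ?_⟩
    have : x = (x * h) * h⁻¹ := by group
    rw [this, he]; group
  · rintro ⟨u', h', hu', hh', he⟩
    exact ⟨u', h' * h, hu', mul_mem hh' hh, by rw [he]; group⟩

theorem mem_conj_map (U : Subgroup G) (v : G) (k : G) :
    k ∈ U.map (MulAut.conj v).toMonoidHom ↔ v⁻¹ * k * v ∈ U := by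
  rw [Subgroup.mem_map_equiv]
  simp [MulAut.conj]

end Bridge14

noncomputable section Counting14

variable {G : Type} [Group G] [Fintype G]
variable {W : Type} [AddCommGroup W] [Module ℂ W] [FiniteDimensional ℂ W]

open scoped Classical

theorem counting (U H : Subgroup G) (ρ : Representation ℂ ↥U W) (v : G) :
    indFn (H ⊓ U.map (MulAut.conj v).toMonoidHom) H
        (resFn (H ⊓ U.map (MulAut.conj v).toMonoidHom) (conjFn v (chiFn U ρ)))
      = mkCharFn U H ρ (dosetInv U H v) := by
  funext g
  set K := H ⊓ U.map (MulAut.conj v).toMonoidHom with hK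
  have hmemK : ∀ t : G, t ∈ K ↔ (t ∈ H ∧ v⁻¹ * t * v ∈ U) := by
    intro t; rw [hK, Subgroup.mem_inf, mem_conj_map]
  by_cases hg : g ∈ H
  swap
  · rw [indFn, if_neg hg, mkCharFn, if_neg hg]
  rw [indFn, if_pos hg, mkCharFn, if_pos hg]
  set θ := chiFn U ρ with hθ
  -- Step 1 : simplify the LHS summand
  have hstep1 : ∀ y : G,
      (if y ∈ H then resFn K (conjFn v θ) (y⁻¹ * g * y) else 0)
        = (if y ∈ H then θ (v⁻¹ * (y⁻¹ * g * y) * v) else 0) := by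
    intro y
    by_cases hy : y ∈ H
    · rw [if_pos hy, if_pos hy, resFn, conjFn]
      by_cases hU : v⁻¹ * (y⁻¹ * g * y) * v ∈ U
      · rw [if_pos ((hmemK _).2 ⟨mul_mem (mul_mem (inv_mem hy) hg) hy, hU⟩)]
      · by_cases htK : y⁻¹ * g * y ∈ K
        · rw [if_pos htK]
        · rw [if_neg htK, hθ, chiFn_supp U ρ hU]
    · rw [if_neg hy, if_neg hy]
  rw [Finset.sum_congr rfl fun y _ => hstep1 y]
  -- re-index y ↦ y⁻¹
  have hreind : (∑ y : G, if y ∈ H then θ (v⁻¹ * (y⁻¹ * g * y) * v) else 0)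
      = ∑ h : G, if h ∈ H then θ (v⁻¹ * (h * g * h⁻¹) * v) else 0 := by
    rw [sum_inv_reindex (fun y => if y ∈ H then θ (v⁻¹ * (y⁻¹ * g * y) * v) else 0)]
    refine Finset.sum_congr rfl fun y _ => ?_
    have h1 : y⁻¹ ∈ H ↔ y ∈ H := by simp
    rw [if_congr h1 rfl rfl, inv_inv]
  rw [hreind]
  -- the fibre counting
  set P : Finset (G × G) := Finset.univ.filter (fun p => p.1 ∈ U ∧ p.2 ∈ H) with hP
  set Φ : G × G → G := fun p => p.1 * v⁻¹ * p.2 with hΦ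
  have hfibercard : ∀ x : G, (P.filter (fun p => Φ p = x)).card
      = if x ∈ dosetInv U H v then Nat.card ↥K else 0 := by
    intro x
    by_cases hx : x ∈ dosetInv U H v
    · rw [if_pos hx]
      obtain ⟨u₀, h₀, hu₀, hh₀, hx₀⟩ := hx
      rw [Nat.card_eq_fintype_card, ← Finset.card_univ]
      refine Finset.card_bij' (fun p hp => (⟨h₀ * p.2⁻¹, ?_⟩ : ↥K))
        (fun k _ => (u₀ * (v⁻¹ * (k : G) * v), (k : G)⁻¹ * h₀)) ?_ ?_ ?_ ?_
      · have hp' := Finset.mem_filter.1 hp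
        have hp'' := Finset.mem_filter.1 hp'.1
        obtain ⟨hp1, hp2⟩ := hp''.2
        have he : p.1 * v⁻¹ * p.2 = u₀ * v⁻¹ * h₀ := by
          have hthis : p.1 * v⁻¹ * p.2 = x := hp'.2
          rw [hthis, hx₀]
        have hkey : v⁻¹ * (h₀ * p.2⁻¹) * v = u₀⁻¹ * p.1 := by
          have hp1e : p.1 = u₀ * v⁻¹ * h₀ * p.2⁻¹ * v := by rw [← he]; group
          rw [hp1e]; group
        exact (hmemK _).2 ⟨mul_mem hh₀ (inv_mem hp2), by
          rw [hkey]; exact mul_mem (inv_mem hu₀) hp1⟩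
      · intro p hp; exact Finset.mem_univ _
      · intro k _
        refine Finset.mem_filter.2 ⟨Finset.mem_filter.2 ⟨Finset.mem_univ _, ?_, ?_⟩, ?_⟩
        · exact mul_mem hu₀ ((hmemK _).1 k.2).2
        · exact mul_mem (inv_mem ((hmemK _).1 k.2).1) hh₀
        · rw [hΦ, hx₀]; group
      · intro p hp
        have hp' := Finset.mem_filter.1 hp
        have hp'' := Finset.mem_filter.1 hp'.1
        obtain ⟨hp1, hp2⟩ := hp''.2
        have he : p.1 * v⁻¹ * p.2 = u₀ * v⁻¹ * h₀ := by
          have hthis : p.1 * v⁻¹ * p.2 = x := hp'.2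
          rw [hthis, hx₀]
        have hkey : v⁻¹ * (h₀ * p.2⁻¹) * v = u₀⁻¹ * p.1 := by
          have hp1e : p.1 = u₀ * v⁻¹ * h₀ * p.2⁻¹ * v := by rw [← he]; group
          rw [hp1e]; group
        refine Prod.ext ?_ ?_
        · show u₀ * (v⁻¹ * (h₀ * p.2⁻¹) * v) = p.1
          rw [hkey]; group
        · show (h₀ * p.2⁻¹)⁻¹ * h₀ = p.2
          group
      · intro k _
        apply Subtype.ext
        show h₀ * ((k : G)⁻¹ * h₀)⁻¹ = (k : G)
        group
    · rw [if_neg hx, Finset.card_eq_zero, Finset.filter_eq_empty_iff]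
      intro p hp
      have hp'' := (Finset.mem_filter.1 hp).2
      intro heq
      exact hx ⟨p.1, p.2, hp''.1, hp''.2, heq.symm⟩
  have hfibersum : (∑ p ∈ P, θ (Φ p * g * (Φ p)⁻¹))
      = ∑ x : G, ((P.filter (fun p => Φ p = x)).card : ℂ) * θ (x * g * x⁻¹) := by
    rw [← Finset.sum_fiberwise_of_maps_to (g := Φ) (fun p _ => Finset.mem_univ (Φ p))
      (fun p => θ (Φ p * g * (Φ p)⁻¹))]
    refine Finset.sum_congr rfl fun x _ => ?_
    have : ∀ p ∈ P.filter (fun p => Φ p = x), θ (Φ p * g * (Φ p)⁻¹) = θ (x * g * x⁻¹) := by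
      intro p hp
      rw [(Finset.mem_filter.1 hp).2]
    rw [Finset.sum_congr rfl this, Finset.sum_const, nsmul_eq_mul]
  have hpairs : (∑ p ∈ P, θ (Φ p * g * (Φ p)⁻¹))
      = (Nat.card ↥U : ℂ) * ∑ h : G, (if h ∈ H then θ (v⁻¹ * (h * g * h⁻¹) * v) else 0) := by
    rw [hP, Finset.sum_filter, Fintype.sum_prod_type]
    have hpt : ∀ u h : G, (if (u ∈ U ∧ h ∈ H) then θ (Φ (u, h) * g * (Φ (u, h))⁻¹) else 0)
        = if u ∈ U then (if h ∈ H then θ (v⁻¹ * (h * g * h⁻¹) * v) else 0) else 0 := by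
      intro u h
      by_cases hu : u ∈ U
      · by_cases hh : h ∈ H
        · rw [if_pos ⟨hu, hh⟩, if_pos hu, if_pos hh]
          have harg : Φ (u, h) * g * (Φ (u, h))⁻¹
              = u * (v⁻¹ * (h * g * h⁻¹) * v) * u⁻¹ := by
            rw [hΦ]; show u * v⁻¹ * h * g * (u * v⁻¹ * h)⁻¹ = _; group
          rw [harg, hθ, chiFn_conj U ρ hu]
        · rw [if_neg (fun hc => hh hc.2), if_neg hh, if_pos hu]
      · rw [if_neg (fun hc => hu hc.1), if_neg hu]
    rw [Finset.sum_congr rfl fun u _ => Finset.sum_congr rfl fun h _ => hpt u h]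
    have : ∀ u : G, (∑ h : G, if u ∈ U then (if h ∈ H then θ (v⁻¹ * (h * g * h⁻¹) * v) else 0) else 0)
        = if u ∈ U then (∑ h : G, if h ∈ H then θ (v⁻¹ * (h * g * h⁻¹) * v) else 0) else 0 := by
      intro u
      by_cases hu : u ∈ U
      · simp only [if_pos hu]
      · simp only [if_neg hu, Finset.sum_const_zero]
    rw [Finset.sum_congr rfl fun u _ => this u, sum_ite_mem_subgroup U, Finset.sum_const,
      Finset.card_univ, ← Nat.card_eq_fintype_card, nsmul_eq_mul]
  -- put everything together
  have hKpos : (Nat.card ↥K : ℂ) ≠ 0 := Nat.cast_ne_zero.2 Nat.card_pos.ne'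
  have hUpos : (Nat.card ↥U : ℂ) ≠ 0 := Nat.cast_ne_zero.2 Nat.card_pos.ne'
  have hmain : (Nat.card ↥K : ℂ) * (∑ x : G, if x ∈ dosetInv U H v then θ (x * g * x⁻¹) else 0)
      = (Nat.card ↥U : ℂ) * ∑ h : G, (if h ∈ H then θ (v⁻¹ * (h * g * h⁻¹) * v) else 0) := by
    rw [← hpairs, hfibersum, Finset.mul_sum]
    refine Finset.sum_congr rfl fun x _ => ?_
    rw [hfibercard x]
    by_cases hx : x ∈ dosetInv U H v
    · rw [if_pos hx, if_pos hx]
    · rw [if_neg hx, if_neg hx, Nat.cast_zero, zero_mul, mul_zero]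
  have hX : (∑ x : G, if x ∈ dosetInv U H v then θ (x * g * x⁻¹) else 0)
      = (Nat.card ↥K : ℂ)⁻¹ *
          ((Nat.card ↥U : ℂ) * ∑ h : G, (if h ∈ H then θ (v⁻¹ * (h * g * h⁻¹) * v) else 0)) := by
    rw [← hmain, ← mul_assoc, inv_mul_cancel₀ hKpos, one_mul]
  rw [hX]
  field_simp

end Counting14

noncomputable section GM14

variable {G : Type} [Group G] [Fintype G]
variable {W : Type} [AddCommGroup W] [Module ℂ W] [FiniteDimensional ℂ W]

open scoped Classical

theorem chiFn_eq_charFn (U : Subgroup G) (V : FDRep ℂ ↥U) :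
    (fun g => if hg : g ∈ U then V.character ⟨g, hg⟩ else 0) = chiFn U V.ρ := rfl

theorem isCharOn_chiFn (K : Subgroup G) (ρ : Representation ℂ ↥K W) :
    IsCharOn K (chiFn K ρ) := ⟨FDRep.of ρ, by funext g; rfl⟩

theorem isCharOn_zero (K : Subgroup G) : IsCharOn K (fun _ => 0) := by
  refine ⟨FDRep.of (Representation.trivial ℂ (G := ↥K) (V := ↥(⊥ : Submodule ℂ ℂ))), ?_⟩
  funext g
  by_cases hg : g ∈ K
  · rw [dif_pos hg]
    have : (FDRep.of (Representation.trivial ℂ (G := ↥K)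
        (V := ↥(⊥ : Submodule ℂ ℂ)))).character ⟨g, hg⟩
        = LinearMap.trace ℂ _ (LinearMap.id (M := ↥(⊥ : Submodule ℂ ℂ))) := rfl
    rw [this, LinearMap.trace_id]
    simp
  · rw [dif_neg hg]

/-- direct sum (product) of two representations -/
def repProd {X : Type} [Group X] {V₁ V₂ : Type} [AddCommGroup V₁] [Module ℂ V₁]
    [AddCommGroup V₂] [Module ℂ V₂] (ρ₁ : Representation ℂ X V₁)
    (ρ₂ : Representation ℂ X V₂) : Representation ℂ X (V₁ × V₂) where
  toFun x := (ρ₁ x).prodMap (ρ₂ x)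
  map_one' := by
    apply LinearMap.ext; intro p
    simp
  map_mul' x y := by
    apply LinearMap.ext; intro p
    simp

theorem IsCharOn.add {K : Subgroup G} {f h : G → ℂ} (hf : IsCharOn K f)
    (hh : IsCharOn K h) : IsCharOn K (fun g => f g + h g) := by
  obtain ⟨A, rfl⟩ := hf
  obtain ⟨B, rfl⟩ := hh
  refine ⟨FDRep.of (repProd A.ρ B.ρ), ?_⟩
  funext g
  show (if hg : g ∈ K then A.character ⟨g, hg⟩ else 0)
      + (if hg : g ∈ K then B.character ⟨g, hg⟩ else 0)
    = if hg : g ∈ K then (FDRep.of (repProd A.ρ B.ρ)).character ⟨g, hg⟩ else 0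
  by_cases hg : g ∈ K
  · rw [dif_pos hg, dif_pos hg, dif_pos hg]
    have : (FDRep.of (repProd A.ρ B.ρ)).character ⟨g, hg⟩
        = LinearMap.trace ℂ _ ((A.ρ ⟨g, hg⟩).prodMap (B.ρ ⟨g, hg⟩)) := rfl
    rw [this, LinearMap.trace_prodMap']
    rfl
  · rw [dif_neg hg, dif_neg hg, dif_neg hg, add_zero]

/-- conjugation homomorphism `K →* U'`, `k ↦ v⁻¹ k v`. -/
def conjHom (K U' : Subgroup G) (v : G) (hKU : ∀ k, k ∈ K → v⁻¹ * k * v ∈ U') :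
    ↥K →* ↥U' where
  toFun k := ⟨v⁻¹ * ↑k * v, hKU ↑k k.2⟩
  map_one' := by apply Subtype.ext; show v⁻¹ * 1 * v = 1; group
  map_mul' a b := by
    apply Subtype.ext
    show v⁻¹ * (↑a * ↑b) * v = (v⁻¹ * ↑a * v) * (v⁻¹ * ↑b * v)
    group

theorem resFn_conjFn_eq_chiFn (K U' : Subgroup G) (ρ : Representation ℂ ↥U' W) (v : G)
    (hKU : ∀ k, k ∈ K → v⁻¹ * k * v ∈ U') :
    resFn K (conjFn v (chiFn U' ρ)) = chiFn K (ρ.comp (conjHom K U' v hKU)) := by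
  funext g
  by_cases hg : g ∈ K
  · rw [resFn, if_pos hg, conjFn, chiFn, chiFn, dif_pos (hKU g hg), dif_pos hg]
    rfl
  · rw [resFn, if_neg hg, chiFn, dif_neg hg]

theorem indFn_add (K L : Subgroup G) (f h : G → ℂ) :
    indFn K L (fun g => f g + h g) = fun g => indFn K L f g + indFn K L h g := by
  funext g
  rw [indFn, indFn, indFn]
  by_cases hg : g ∈ L
  · rw [if_pos hg, if_pos hg, if_pos hg, ← mul_add, ← Finset.sum_add_distrib]
    congr 1
    refine Finset.sum_congr rfl fun y _ => ?_
    by_cases hy : y ∈ L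
    · simp [hy]
    · simp [hy]
  · rw [if_neg hg, if_neg hg, if_neg hg, add_zero]

theorem Tfn_add (H : Subgroup G) (f h : G → ℂ) :
    Tfn H (fun g => f g + h g) = fun g => Tfn H f g + Tfn H h g := by
  funext g
  rw [Tfn, Tfn, Tfn, resFn, resFn, resFn, indFn_add H ⊤ f h]
  by_cases hg : g ∈ H
  · simp [hg]
  · simp [hg]

theorem indFn_top_trans (U H : Subgroup G) (hUH : U ≤ H) (θ : G → ℂ)
    (hsupp : ∀ g, g ∉ U → θ g = 0) :
    indFn H ⊤ (indFn U H θ) = indFn U ⊤ θ := by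
  funext g
  rw [indFn, indFn, if_pos (Subgroup.mem_top g), if_pos (Subgroup.mem_top g)]
  have h1 : ∀ y : G, (if y ∈ (⊤ : Subgroup G) then indFn U H θ (y⁻¹ * g * y) else 0)
      = (Nat.card ↥U : ℂ)⁻¹ *
          ∑ w : G, (if w ∈ H then θ (w⁻¹ * (y⁻¹ * g * y) * w) else 0) := by
    intro y
    rw [if_pos (Subgroup.mem_top y), indFn]
    by_cases ht : y⁻¹ * g * y ∈ H
    · rw [if_pos ht]
    · rw [if_neg ht]
      have hz : ∀ w : G, (if w ∈ H then θ (w⁻¹ * (y⁻¹ * g * y) * w) else 0) = 0 := by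
        intro w
        by_cases hw : w ∈ H
        · rw [if_pos hw]
          apply hsupp
          intro hmem
          exact ht (by
            have : w * (w⁻¹ * (y⁻¹ * g * y) * w) * w⁻¹ ∈ H :=
              mul_mem (mul_mem hw (hUH hmem)) (inv_mem hw)
            have he : w * (w⁻¹ * (y⁻¹ * g * y) * w) * w⁻¹ = y⁻¹ * g * y := by group
            rwa [he] at this)
        · rw [if_neg hw]
      rw [Finset.sum_congr rfl fun w _ => hz w, Finset.sum_const_zero, mul_zero]
  rw [Finset.sum_congr rfl fun y _ => h1 y, ← Finset.mul_sum, Finset.sum_comm]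
  have h2 : ∀ w : G, (∑ y : G, if w ∈ H then θ (w⁻¹ * (y⁻¹ * g * y) * w) else 0)
      = if w ∈ H then (∑ t : G, if t ∈ (⊤ : Subgroup G) then θ (t⁻¹ * g * t) else 0) else 0 := by
    intro w
    by_cases hw : w ∈ H
    · simp only [if_pos hw, Subgroup.mem_top, if_true]
      exact Fintype.sum_equiv (Equiv.mulRight w) _ _ fun t => by
        simp only [Equiv.coe_mulRight]
        congr 1
        group
    · simp only [if_neg hw, Finset.sum_const_zero]
  rw [Finset.sum_congr rfl fun w _ => h2 w, sum_ite_mem_subgroup H, Finset.sum_const,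
    Finset.card_univ, ← Nat.card_eq_fintype_card, nsmul_eq_mul]
  have hH0 : (Nat.card ↥H : ℂ) ≠ 0 := Nat.cast_ne_zero.2 Nat.card_pos.ne'
  have hU0 : (Nat.card ↥U : ℂ) ≠ 0 := Nat.cast_ne_zero.2 Nat.card_pos.ne'
  field_simp

/-- The Mackey step. -/
theorem GM (U H : Subgroup G) (ρ : Representation ℂ ↥U W) (v : G) :
    ∃ δ : G → ℂ, IsCharOn H δ ∧
      resFn H (indFn U ⊤ (chiFn U ρ)) = fun g =>
        indFn (H ⊓ U.map (MulAut.conj v).toMonoidHom) H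
          (resFn (H ⊓ U.map (MulAut.conj v).toMonoidHom) (conjFn v (chiFn U ρ))) g
        + δ g := by
  refine ⟨mkCharFn U H ρ (dosetInv U H v)ᶜ,
    isCharOn_mkCharFn U H ρ _ (fun u hu x => not_congr (dosetInv_left U H v u hu x))
      (fun h hh x => not_congr (dosetInv_right U H v h hh x)), ?_⟩
  rw [resFn_indFn_top_eq U H ρ, counting U H ρ v]
  funext g
  rw [mkCharFn, mkCharFn, mkCharFn]
  by_cases hg : g ∈ H
  · rw [if_pos hg, if_pos hg, if_pos hg, ← mul_add, ← Finset.sum_add_distrib]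
    congr 1
    refine Finset.sum_congr rfl fun x _ => ?_
    by_cases hx : x ∈ dosetInv U H v
    · simp [hx, Set.mem_compl_iff]
    · simp [hx, Set.mem_compl_iff]
  · rw [if_neg hg, if_neg hg, if_neg hg, add_zero]

end GM14

noncomputable section Constituent14

open CategoryTheory

variable {X : Type} [Group X] [Fintype X]

theorem char_conj_inv (V : FDRep ℂ X) (g : X) :
    V.character g⁻¹ = (starRingEnd ℂ) (V.character g) := by
  have hn : 0 < orderOf g := orderOf_pos g
  have hfn : (V.ρ g) ^ (orderOf g) = 1 := by
    rw [← map_pow, pow_orderOf_eq_one, map_one]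
  have hinv : V.ρ g⁻¹ = (V.ρ g) ^ (orderOf g - 1) := by
    rw [← map_pow]
    congr 1
    symm
    refine eq_inv_of_mul_eq_one_left ?_
    rw [← pow_succ, Nat.sub_add_cancel hn, pow_orderOf_eq_one]
  show LinearMap.trace ℂ V (V.ρ g⁻¹) = (starRingEnd ℂ) (LinearMap.trace ℂ V (V.ρ g))
  rw [hinv]
  exact trace_pow_pred_conj (V.ρ g) hn hfn

theorem exists_equivariant_proj (A : FDRep ℂ X) (q : Submodule ℂ A)
    (hinv : ∀ g : X, ∀ y ∈ q, A.ρ g y ∈ q) :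
    ∃ π : A →ₗ[ℂ] A, (∀ m, π m ∈ q) ∧ (∀ m ∈ q, π m = m) ∧
      (∀ g : X, π ∘ₗ A.ρ g = A.ρ g ∘ₗ π) := by
  obtain ⟨q', hq'⟩ := Submodule.exists_isCompl q
  set π₀ : A →ₗ[ℂ] A := q.subtype ∘ₗ (q.projectionOnto q' hq') with hπ₀
  have hπ₀q : ∀ m, π₀ m ∈ q := fun m => (q.projectionOnto q' hq' m).2
  have hπ₀fix : ∀ m ∈ q, π₀ m = m := by
    intro m hm
    rw [hπ₀]
    simp [Submodule.projectionOnto_apply_left hq' ⟨m, hm⟩]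
  set c : ℂ := (Nat.card X : ℂ)⁻¹ with hc
  set π : A →ₗ[ℂ] A := c • ∑ g : X, (A.ρ g) ∘ₗ π₀ ∘ₗ (A.ρ g⁻¹) with hπ
  have happly : ∀ m, π m = c • ∑ g : X, (A.ρ g) (π₀ ((A.ρ g⁻¹) m)) := by
    intro m
    rw [hπ]
    simp [LinearMap.sum_apply]
  refine ⟨π, ?_, ?_, ?_⟩
  · intro m
    rw [happly]
    refine Submodule.smul_mem _ _ (Submodule.sum_mem _ fun g _ => ?_)
    exact hinv g _ (hπ₀q _)
  · intro m hm
    rw [happly]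
    have hterm : ∀ g : X, (A.ρ g) (π₀ ((A.ρ g⁻¹) m)) = m := by
      intro g
      rw [hπ₀fix _ (hinv g⁻¹ m hm), ← Module.End.mul_apply, ← map_mul, mul_inv_cancel,
        map_one, Module.End.one_apply]
    rw [Finset.sum_congr rfl fun g _ => hterm g, Finset.sum_const, Finset.card_univ,
      ← Nat.card_eq_fintype_card, ← Nat.cast_smul_eq_nsmul ℂ, smul_smul, hc,
      inv_mul_cancel₀ (Nat.cast_ne_zero.2 Nat.card_pos.ne'), one_smul]
  · intro h
    apply LinearMap.ext; intro m
    rw [LinearMap.comp_apply, LinearMap.comp_apply, happly, happly, map_smul]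
    congr 1
    rw [map_sum]
    refine Fintype.sum_equiv (Equiv.mulLeft h⁻¹) _ _ fun g => ?_
    simp only [Equiv.coe_mulLeft]
    have e1 : (h⁻¹ * g)⁻¹ = g⁻¹ * h := by group
    rw [e1, map_mul, Module.End.mul_apply,
      ← Module.End.mul_apply (A.ρ h) (A.ρ h⁻¹), ← map_mul, mul_inv_cancel, map_one,
      Module.End.one_apply, map_mul, Module.End.mul_apply]


/-- restriction of a representation to an invariant submodule, as a representation. -/
def subRep (A : FDRep ℂ X) (q : Submodule ℂ A)
    (hinv : ∀ g : X, ∀ y ∈ q, A.ρ g y ∈ q) : Representation ℂ X ↥q where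
  toFun g := (A.ρ g).restrict (hinv g)
  map_one' := by
    apply LinearMap.ext; intro y
    apply Subtype.ext
    simp [LinearMap.restrict_apply]
  map_mul' g h := by
    apply LinearMap.ext; intro y
    apply Subtype.ext
    simp [LinearMap.restrict_apply]

/-- the inclusion of an invariant submodule, as a morphism of `FDRep`s. -/
def subInclusion (B : FDRep ℂ X) (p : Submodule ℂ B)
    (hinv : ∀ g : X, ∀ y ∈ p, B.ρ g y ∈ p) : FDRep.of (subRep B p hinv) ⟶ B where
  hom := FGModuleCat.ofHom p.subtype
  comm g := by
    ext y
    rfl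

theorem subInclusion_hom_apply (B : FDRep ℂ X) (p : Submodule ℂ B)
    (hinv : ∀ g : X, ∀ y ∈ p, B.ρ g y ∈ p) (y : ↥p) :
    (subInclusion B p hinv).hom y = (y : B) := rfl

theorem simple_submodule_eq_top (B : FDRep ℂ X) (hB : CategoryTheory.Simple B)
    (p : Submodule ℂ B) (hinv : ∀ g : X, ∀ y ∈ p, B.ρ g y ∈ p) (hp : p ≠ ⊥) :
    p = ⊤ := by
  classical
  set ι := subInclusion B p hinv with hι
  have hmono : CategoryTheory.Mono ι := by
    constructor
    intro Z u v huv
    apply Action.Hom.ext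
    have h1 : u.hom ≫ ι.hom = v.hom ≫ ι.hom := by
      rw [← Action.comp_hom, ← Action.comp_hom, huv]
    ext z
    have h2 : ι.hom (u.hom z) = ι.hom (v.hom z) := by
      exact congrArg (fun (F : Z.V ⟶ B.V) => F z) h1
    exact h2
  have hne : ι ≠ 0 := by
    obtain ⟨y, hy, hy0⟩ := Submodule.exists_mem_ne_zero_of_ne_bot hp
    intro h0
    have hz : ι.hom (⟨y, hy⟩ : ↥p) = 0 := by
      rw [h0, Action.zero_hom]
      rfl
    rw [hι, subInclusion_hom_apply] at hz
    exact hy0 hz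
  have hiso : CategoryTheory.IsIso ι := (hB.mono_isIso_iff_nonzero ι).2 hne
  rw [Submodule.eq_top_iff']
  intro b
  have hsurj : ι.hom ((CategoryTheory.inv ι).hom b) = b := by
    have h1 := CategoryTheory.IsIso.inv_hom_id ι
    have h2 : (CategoryTheory.inv ι ≫ ι).hom = (𝟙 B : B ⟶ B).hom :=
      congrArg Action.Hom.hom h1
    rw [Action.comp_hom, Action.id_hom] at h2
    exact congrArg (fun (F : B.V ⟶ B.V) => F b) h2
  exact hsurj ▸ (show ι.hom ((CategoryTheory.inv ι).hom b) ∈ p from ((CategoryTheory.inv ι).hom b).2)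


theorem char_decompose (A B : FDRep ℂ X) (hB : CategoryTheory.Simple B)
    (hne : (∑ x : X, B.character x * (starRingEnd ℂ) (A.character x)) ≠ 0) :
    ∃ D : FDRep ℂ X, ∀ g : X, A.character g = B.character g + D.character g := by
  classical
  haveI : Invertible ((Fintype.card X : ℂ)) :=
    invertibleOfNonzero (Nat.cast_ne_zero.2 Fintype.card_ne_zero)
  -- step 1 : a nonzero invariant element of linHom
  have hsum : (∑ x : X, (FDRep.of (Representation.linHom A.ρ B.ρ)).character x)
      = ∑ x : X, B.character x * (starRingEnd ℂ) (A.character x) := by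
    refine Finset.sum_congr rfl fun x _ => ?_
    rw [FDRep.char_linHom, ← char_conj_inv, mul_comm]
  have havg := FDRep.average_char_eq_finrank_invariants
    (FDRep.of (Representation.linHom A.ρ B.ρ))
  rw [hsum, show (FDRep.of (Representation.linHom A.ρ B.ρ)).ρ
    = Representation.linHom A.ρ B.ρ from FDRep.of_ρ' _] at havg
  have hinvne : (⅟ (Fintype.card X : ℂ)) ≠ 0 :=
    left_ne_zero_of_mul_eq_one (invOf_mul_self (Fintype.card X : ℂ))
  have hfr0' := havg ▸ mul_ne_zero (inv_ne_zero (Nat.cast_ne_zero.2 Nat.card_pos.ne')) hne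
  haveI hnontriv : Nontrivial
      ↥(Representation.invariants (Representation.linHom A.ρ B.ρ)) :=
    Module.nontrivial_of_finrank_pos (R := ℂ)
      (Nat.pos_of_ne_zero (fun h => hfr0' (by exact_mod_cast h)))
  obtain ⟨fel, hf0⟩ := exists_ne
    (0 : ↥(Representation.invariants (Representation.linHom A.ρ B.ρ)))
  have hfinv : ∀ g : X, (Representation.linHom A.ρ B.ρ) g fel.1 = fel.1 := by
    intro g
    have h2 := fel.2
    rw [Representation.mem_invariants] at h2
    exact h2 g
  set f : (A : Type) →ₗ[ℂ] (B : Type) := fel.1 with hfdef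
  have hfne : f ≠ 0 := fun h => hf0 (Subtype.ext h)
  have hequiv : ∀ g : X, B.ρ g ∘ₗ f = f ∘ₗ A.ρ g := by
    intro g
    have h1 := hfinv g
    rw [Representation.linHom_apply] at h1
    calc B.ρ g ∘ₗ f = (B.ρ g ∘ₗ f ∘ₗ A.ρ g⁻¹) ∘ₗ A.ρ g := by
          rw [LinearMap.comp_assoc, LinearMap.comp_assoc, ← Module.End.mul_eq_comp (A.ρ g⁻¹),
            ← map_mul, inv_mul_cancel, map_one]
          rfl
      _ = f ∘ₗ A.ρ g := by rw [h1]
  have hequiv' : ∀ (g : X) (m : (A : Type)), B.ρ g (f m) = f (A.ρ g m) := by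
    intro g m
    have := congrArg (fun (F : (A : Type) →ₗ[ℂ] (B : Type)) => F m) (hequiv g)
    exact this
  -- step 2 : f is surjective
  have hrange : LinearMap.range f = ⊤ := by
    apply simple_submodule_eq_top B hB
    · rintro g y ⟨x, rfl⟩
      exact ⟨A.ρ g x, (hequiv' g x).symm⟩
    · rw [Ne, LinearMap.range_eq_bot]
      exact hfne
  -- step 3 : the kernel and an equivariant complement
  set q := LinearMap.ker f with hq
  have hqinv : ∀ g : X, ∀ y ∈ q, A.ρ g y ∈ q := by
    intro g y hy
    rw [hq, LinearMap.mem_ker, ← hequiv' g y, LinearMap.mem_ker.1 hy, map_zero]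
  obtain ⟨π, hπq, hπfix, hπcomm⟩ := exists_equivariant_proj A q hqinv
  have hπcomm' : ∀ (g : X) (m : (A : Type)), π (A.ρ g m) = A.ρ g (π m) := by
    intro g m
    exact congrArg (fun (F : (A : Type) →ₗ[ℂ] (A : Type)) => F m) (hπcomm g)
  set C := LinearMap.ker π with hC
  have hCinv : ∀ g : X, ∀ y ∈ C, A.ρ g y ∈ C := by
    intro g y hy
    rw [hC, LinearMap.mem_ker, hπcomm' g y, LinearMap.mem_ker.1 hy, map_zero]
  have hπCq : ∀ m, ((LinearMap.id : (A : Type) →ₗ[ℂ] (A : Type)) - π) m ∈ C := by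
    intro m
    rw [hC, LinearMap.mem_ker]
    have : π (m - π m) = π m - π (π m) := map_sub π m (π m)
    simp only [LinearMap.sub_apply, LinearMap.id_apply]
    rw [this, hπfix _ (hπq m), sub_self]
  have hπCfix : ∀ m ∈ C, ((LinearMap.id : (A : Type) →ₗ[ℂ] (A : Type)) - π) m = m := by
    intro m hm
    simp only [LinearMap.sub_apply, LinearMap.id_apply]
    rw [LinearMap.mem_ker.1 hm, sub_zero]
  have hsplit : ∀ g : X, A.character g
      = LinearMap.trace ℂ ↥q ((A.ρ g).restrict (hqinv g))
        + LinearMap.trace ℂ ↥C ((A.ρ g).restrict (hCinv g)) := by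
    intro g
    rw [trace_restrict_eq_trace_comp_proj q π (A.ρ g) hπq hπfix (hqinv g),
      trace_restrict_eq_trace_comp_proj C ((LinearMap.id : (A : Type) →ₗ[ℂ] (A : Type)) - π) (A.ρ g) hπCq hπCfix (hCinv g),
      ← map_add]
    have : (A.ρ g) ∘ₗ π + (A.ρ g) ∘ₗ ((LinearMap.id : (A : Type) →ₗ[ℂ] (A : Type)) - π) = A.ρ g := by
      apply LinearMap.ext; intro m
      simp only [LinearMap.add_apply, LinearMap.comp_apply, LinearMap.sub_apply,
        LinearMap.id_apply, map_sub]
      abel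
    rw [this]
    rfl
  -- step 4 : C is equivariantly isomorphic to B
  set f' : ↥C →ₗ[ℂ] (B : Type) := f ∘ₗ C.subtype with hf'
  have hinj : Function.Injective f' := by
    rw [← LinearMap.ker_eq_bot]
    rw [Submodule.eq_bot_iff]
    rintro ⟨x, hxC⟩ hx
    have hxq : x ∈ q := by
      rw [hq, LinearMap.mem_ker]
      exact hx
    have : x = 0 := by
      have h1 := hπfix x hxq
      rw [LinearMap.mem_ker.1 hxC] at h1
      exact h1.symm
    exact Subtype.ext this
  have hsurjf' : Function.Surjective f' := by
    intro b
    have hb : b ∈ LinearMap.range f := by rw [hrange]; trivial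
    obtain ⟨a, ha⟩ := hb
    refine ⟨⟨a - π a, hπCq a⟩, ?_⟩
    show f (a - π a) = b
    rw [map_sub, LinearMap.mem_ker.1 (hπq a), sub_zero, ha]
  set e := LinearEquiv.ofBijective f' ⟨hinj, hsurjf'⟩ with he
  have hchar : ∀ g : X, LinearMap.trace ℂ ↥C ((A.ρ g).restrict (hCinv g))
      = B.character g := by
    intro g
    have hconj : e.conj ((A.ρ g).restrict (hCinv g)) = B.ρ g := by
      apply LinearMap.ext; intro b
      rw [LinearEquiv.conj_apply]
      simp only [LinearMap.comp_apply, LinearEquiv.coe_coe]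
      have h1 : e ((A.ρ g).restrict (hCinv g) (e.symm b)) = f ((A.ρ g) ((e.symm b) : (A : Type))) := rfl
      rw [h1, ← hequiv' g]
      have h2 : f (((e.symm b) : ↥C) : (A : Type)) = e (e.symm b) := rfl
      rw [h2, LinearEquiv.apply_symm_apply]
    have := LinearMap.trace_conj' ((A.ρ g).restrict (hCinv g)) e
    rw [hconj] at this
    exact this.symm
  refine ⟨FDRep.of (subRep A q hqinv), fun g => ?_⟩
  rw [hsplit g, hchar g, add_comm]
  rfl

end Constituent14

noncomputable section Tower14

variable {G : Type} [Group G] [Fintype G]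
variable {W : Type} [AddCommGroup W] [Module ℂ W] [FiniteDimensional ℂ W]

open scoped Classical

theorem conjFn_one (f : G → ℂ) : conjFn (1 : G) f = f := by
  funext g; rw [conjFn]; simp

theorem resFn_chiFn (H : Subgroup G) (ρ : Representation ℂ ↥H W) :
    resFn H (chiFn H ρ) = chiFn H ρ := by
  funext g
  rw [resFn]
  by_cases hg : g ∈ H
  · rw [if_pos hg]
  · rw [if_neg hg, chiFn_supp H ρ hg]

theorem indFn_self (H : Subgroup G) (ρ : Representation ℂ ↥H W) :
    indFn H H (chiFn H ρ) = chiFn H ρ := by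
  funext g
  rw [indFn]
  by_cases hg : g ∈ H
  · rw [if_pos hg]
    have h1 : ∀ y : G, (if y ∈ H then chiFn H ρ (y⁻¹ * g * y) else 0)
        = (if y ∈ H then chiFn H ρ g else 0) := by
      intro y
      by_cases hy : y ∈ H
      · rw [if_pos hy, if_pos hy]
        have heq : y⁻¹ * g * y = y⁻¹ * g * (y⁻¹)⁻¹ := by rw [inv_inv]
        rw [heq, chiFn_conj H ρ (inv_mem hy) g]
      · rw [if_neg hy, if_neg hy]
    rw [Finset.sum_congr rfl fun y _ => h1 y, sum_ite_mem_subgroup H, Finset.sum_const,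
      Finset.card_univ, ← Nat.card_eq_fintype_card, nsmul_eq_mul, ← mul_assoc,
      inv_mul_cancel₀ (Nat.cast_ne_zero.2 (Nat.card_pos (α := ↥H)).ne'), one_mul]
  · rw [if_neg hg, chiFn_supp H ρ hg]

theorem isCharOn_Tfn (H : Subgroup G) (f : G → ℂ) (hf : IsCharOn H f) :
    IsCharOn H (Tfn H f) := by
  obtain ⟨D, rfl⟩ := hf
  rw [chiFn_eq_charFn, Tfn, resFn_indFn_top_eq H H D.ρ]
  exact isCharOn_mkCharFn H H D.ρ Set.univ (fun _ _ _ => Iff.rfl) (fun _ _ _ => Iff.rfl)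

theorem isCharOn_indFn (N H : Subgroup G) (hNH : N ≤ H) (ρ : Representation ℂ ↥N W) :
    IsCharOn H (indFn N H (chiFn N ρ)) := by
  rw [indFn_eq_mkCharFn N H ρ]
  exact isCharOn_mkCharFn N H ρ ↑H
    (fun u hu x => Subgroup.mul_mem_cancel_left H (hNH hu))
    (fun h hh x => Subgroup.mul_mem_cancel_right H hh)

/-- the main induction: after `j` applications of `T` we find an induced character
from the intersection of `H` with `j` conjugates. -/
theorem tower (H : Subgroup G) (ρH : Representation ℂ ↥H W) :
    ∀ (j : ℕ) (c : Fin j → G),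
    ∃ z : G, (∀ k ∈ (H ⊓ ⨅ i, H.map (MulAut.conj (c i)).toMonoidHom), z⁻¹ * k * z ∈ H) ∧
    ∃ δ : G → ℂ, IsCharOn H δ ∧
    (Tfn H)^[j] (chiFn H ρH) = fun g =>
      indFn (H ⊓ ⨅ i, H.map (MulAut.conj (c i)).toMonoidHom) H
        (resFn (H ⊓ ⨅ i, H.map (MulAut.conj (c i)).toMonoidHom)
          (conjFn z (chiFn H ρH))) g + δ g := by
  intro j
  induction j with
  | zero =>
    intro c
    have hU0 : (H ⊓ ⨅ i, H.map (MulAut.conj (c i)).toMonoidHom) = H := by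
      rw [iInf_of_empty, inf_top_eq]
    refine ⟨1, ?_, (fun _ => 0), isCharOn_zero H, ?_⟩
    · intro k hk
      rw [hU0] at hk
      simpa using hk
    · rw [Function.iterate_zero_apply, hU0, conjFn_one, resFn_chiFn, indFn_self]
      funext g
      rw [add_zero]
  | succ j IH =>
    intro c
    set v := c 0 with hv
    set d : Fin j → G := fun i => v⁻¹ * c i.succ with hd
    obtain ⟨z₀, hz₀, δ₀, hδ₀char, hδ₀eq⟩ := IH d
    set U' := (H ⊓ ⨅ i, H.map (MulAut.conj (d i)).toMonoidHom) with hU'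
    -- the subgroup identity
    have hU : H ⊓ U'.map (MulAut.conj v).toMonoidHom
        = H ⊓ ⨅ i : Fin (j + 1), H.map (MulAut.conj (c i)).toMonoidHom := by
      ext x
      simp only [Subgroup.mem_inf, mem_conj_map, Subgroup.mem_iInf, hU']
      constructor
      · rintro ⟨hxH, h1, h2⟩
        refine ⟨hxH, fun i => ?_⟩
        refine Fin.cases ?_ (fun i' => ?_) i
        · exact h1
        · have h3 := h2 i'
          have heq : (d i')⁻¹ * (v⁻¹ * x * v) * (d i') = (c i'.succ)⁻¹ * x * (c i'.succ) := by
            rw [hd]; group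
          rwa [heq] at h3
      · rintro ⟨hxH, h1⟩
        refine ⟨hxH, ?_, fun i' => ?_⟩
        · exact h1 0
        · have h3 := h1 i'.succ
          have heq : (d i')⁻¹ * (v⁻¹ * x * v) * (d i') = (c i'.succ)⁻¹ * x * (c i'.succ) := by
            rw [hd]; group
          rw [heq]
          exact h3
    -- the new conjugating element
    refine ⟨v * z₀, ?_, ?_⟩
    · intro k hk
      rw [← hU, Subgroup.mem_inf, mem_conj_map] at hk
      have h4 := hz₀ _ hk.2
      have heq : (v * z₀)⁻¹ * k * (v * z₀) = z₀⁻¹ * (v⁻¹ * k * v) * z₀ := by group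
      rw [heq]
      exact h4
    -- the character part
    set ρ' := ρH.comp (conjHom U' H z₀ hz₀) with hρ'
    have hθ' : resFn U' (conjFn z₀ (chiFn H ρH)) = chiFn U' ρ' :=
      resFn_conjFn_eq_chiFn U' H ρH z₀ hz₀
    obtain ⟨δ₁, hδ₁char, hδ₁eq⟩ := GM U' H ρ' v
    -- translate the leading term
    have hterm : resFn (H ⊓ U'.map (MulAut.conj v).toMonoidHom) (conjFn v (chiFn U' ρ'))
        = resFn (H ⊓ U'.map (MulAut.conj v).toMonoidHom)
            (conjFn (v * z₀) (chiFn H ρH)) := by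
      funext g
      rw [resFn, resFn]
      by_cases hg : g ∈ H ⊓ U'.map (MulAut.conj v).toMonoidHom
      · rw [if_pos hg, if_pos hg, conjFn, conjFn]
        have hgU' : v⁻¹ * g * v ∈ U' := by
          have := (Subgroup.mem_inf.1 hg).2
          rwa [mem_conj_map] at this
        have hgH : (v * z₀)⁻¹ * g * (v * z₀) ∈ H := by
          have heq : (v * z₀)⁻¹ * g * (v * z₀) = z₀⁻¹ * (v⁻¹ * g * v) * z₀ := by group
          rw [heq]
          exact hz₀ _ hgU'
        rw [chiFn, chiFn, dif_pos hgU', dif_pos hgH]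
        have hval : (conjHom U' H z₀ hz₀) ⟨v⁻¹ * g * v, hgU'⟩
            = ⟨(v * z₀)⁻¹ * g * (v * z₀), hgH⟩ := by
          apply Subtype.ext
          show z₀⁻¹ * (v⁻¹ * g * v) * z₀ = (v * z₀)⁻¹ * g * (v * z₀)
          group
        show LinearMap.trace ℂ W (ρH ((conjHom U' H z₀ hz₀) ⟨v⁻¹ * g * v, hgU'⟩)) = _
        rw [hval]
      · rw [if_neg hg, if_neg hg]
    refine ⟨fun g => δ₁ g + Tfn H δ₀ g, (hδ₁char.add (isCharOn_Tfn H δ₀ hδ₀char)), ?_⟩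
    rw [Function.iterate_succ_apply', hδ₀eq, Tfn_add]
    have hmid : Tfn H (indFn U' H (resFn U' (conjFn z₀ (chiFn H ρH))))
        = fun g => indFn (H ⊓ U'.map (MulAut.conj v).toMonoidHom) H
            (resFn (H ⊓ U'.map (MulAut.conj v).toMonoidHom)
              (conjFn (v * z₀) (chiFn H ρH))) g + δ₁ g := by
      rw [hθ', Tfn, indFn_top_trans U' H inf_le_left (chiFn U' ρ')
        (fun g hg => chiFn_supp U' ρ' hg), hδ₁eq, ← hterm]
    rw [hmid]
    funext g
    rw [← hU]
    ring

end Tower14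

open scoped Classical

/-- Let `H ≤ G` with core `N = core_G(H)` equal to an
intersection of `m` conjugates of `H` (with `x₁ = 1`).  Then for every
irreducible character `α` of `H` and every irreducible constituent `β` of
`α↓_N`, there is a suitable `z ∈ G` so that `Ind_N^H(β^z)` is a constituent
(summand) of `T^{m-1}(α)`, where `T(α) = (α↑G)↓_H`.  In particular (the
Mackey step), for any `x ∈ G`,
`Ind_{H∩xHx⁻¹}^H(Res_{H∩xHx⁻¹}(α^x))` is a constituent of `T(α)`. -/
theorem core_intersection_constituent [Group G] [Fintype G] (H : Subgroup G)
    (m : ℕ) (hm : 1 ≤ m) (x : Fin m → G) (hx0 : x ⟨0, hm⟩ = 1)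
    (hcore : (⨅ i, H.map (MulAut.conj (x i)).toMonoidHom) = H.normalCore) :
    (∀ α β : G → ℂ, IsIrrCharOn H α → IsIrrCharOn H.normalCore β →
      innerOn H.normalCore β (resFn H.normalCore α) ≠ 0 →
      ∃ z : G, ∃ δ : G → ℂ, IsCharOn H δ ∧
        (Tfn H)^[m - 1] α =
          fun g => indFn H.normalCore H (conjFn z β) g + δ g) ∧
    (∀ α : G → ℂ, IsIrrCharOn H α → ∀ y : G,
      ∃ δ : G → ℂ, IsCharOn H δ ∧
        Tfn H α = fun g =>
          indFn (H ⊓ H.map (MulAut.conj y).toMonoidHom) H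
            (resFn (H ⊓ H.map (MulAut.conj y).toMonoidHom) (conjFn y α)) g
          + δ g) := by
  have hNH : H.normalCore ≤ H := Subgroup.normalCore_le H
  have hN : H.normalCore.Normal := Subgroup.normalCore_normal H
  constructor
  · -- part 1
    intro α β hα hβ hinner
    obtain ⟨V, hVs, hαeq⟩ := hα
    obtain ⟨B, hBs, hβeq⟩ := hβ
    subst hαeq
    subst hβeq
    rw [chiFn_eq_charFn H V, chiFn_eq_charFn H.normalCore B] at hinner ⊢
    -- apply the tower
    set c : Fin (m - 1) → G := fun i => x ⟨i.1 + 1, by omega⟩ with hc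
    obtain ⟨z, hz, δ, hδchar, heq⟩ := tower H V.ρ (m - 1) c
    have hUN : (H ⊓ ⨅ i, H.map (MulAut.conj (c i)).toMonoidHom) = H.normalCore := by
      rw [← hcore]
      ext t
      simp only [Subgroup.mem_inf, Subgroup.mem_iInf, mem_conj_map]
      constructor
      · rintro ⟨htH, h1⟩ i
        by_cases hi : i.1 = 0
        · have hieq : i = ⟨0, hm⟩ := Fin.ext hi
          rw [hieq, hx0]
          simpa using htH
        · have hi' : i.1 - 1 < m - 1 := by omega
          have h2 := h1 ⟨i.1 - 1, hi'⟩
          have hceq : c ⟨i.1 - 1, hi'⟩ = x i := by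
            show x ⟨(i.1 - 1) + 1, _⟩ = x i
            congr 1
            apply Fin.ext
            show i.1 - 1 + 1 = i.1
            omega
          rwa [hceq] at h2
      · intro h1
        constructor
        · have h2 := h1 ⟨0, hm⟩
          rw [hx0] at h2
          simpa using h2
        · intro i'
          exact h1 ⟨i'.1 + 1, by omega⟩
    rw [hUN] at hz heq
    -- the restriction of α to the core decomposes
    set ρres := V.ρ.comp (Subgroup.inclusion hNH) with hρres
    have hres : resFn H.normalCore (chiFn H V.ρ) = chiFn H.normalCore ρres := by
      funext g
      rw [resFn, chiFn, chiFn]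
      by_cases hg : g ∈ H.normalCore
      · rw [if_pos hg, dif_pos hg, dif_pos (hNH hg)]
        rfl
      · rw [if_neg hg, dif_neg hg]
    have hSne : (∑ t : ↥H.normalCore,
        B.character t * (starRingEnd ℂ) ((FDRep.of ρres).character t)) ≠ 0 := by
      intro h0
      apply hinner
      rw [innerOn, hres, sum_ite_mem_subgroup H.normalCore
        (fun u => chiFn H.normalCore B.ρ u * (starRingEnd ℂ) (chiFn H.normalCore ρres u))]
      have h1 : ∀ t : ↥H.normalCore,
          chiFn H.normalCore B.ρ ↑t * (starRingEnd ℂ) (chiFn H.normalCore ρres ↑t)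
            = B.character t * (starRingEnd ℂ) ((FDRep.of ρres).character t) := by
        intro t
        rw [chiFn, dif_pos t.2, chiFn, dif_pos t.2]
        congr 1 <;> simp [Subtype.coe_eta] <;> rfl
      rw [Finset.sum_congr rfl fun t _ => h1 t, h0, mul_zero]
    obtain ⟨D, hD⟩ := char_decompose (FDRep.of ρres) B hBs hSne
    have hresfn : resFn H.normalCore (chiFn H V.ρ)
        = fun g => chiFn H.normalCore B.ρ g + chiFn H.normalCore D.ρ g := by
      rw [hres]
      funext g
      rw [chiFn, chiFn, chiFn]
      by_cases hg : g ∈ H.normalCore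
      · rw [dif_pos hg, dif_pos hg, dif_pos hg]
        exact hD ⟨g, hg⟩
      · rw [dif_neg hg, dif_neg hg, dif_neg hg, add_zero]
    have hconjmem : ∀ g : G, g ∈ H.normalCore ↔ z⁻¹ * g * z ∈ H.normalCore := by
      intro g
      constructor
      · intro hg
        have := hN.conj_mem g hg z⁻¹
        rwa [inv_inv] at this
      · intro hg
        have := hN.conj_mem _ hg z
        have heq2 : z * (z⁻¹ * g * z) * z⁻¹ = g := by group
        rwa [heq2] at this
    have harg : resFn H.normalCore (conjFn z (chiFn H V.ρ))
        = fun g => conjFn z (chiFn H.normalCore B.ρ) g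
            + conjFn z (chiFn H.normalCore D.ρ) g := by
      funext g
      rw [resFn, conjFn, conjFn, conjFn]
      by_cases hg : g ∈ H.normalCore
      · rw [if_pos hg]
        have hz' : z⁻¹ * g * z ∈ H.normalCore := (hconjmem g).1 hg
        have h2 : chiFn H V.ρ (z⁻¹ * g * z)
            = resFn H.normalCore (chiFn H V.ρ) (z⁻¹ * g * z) := by
          rw [resFn, if_pos hz']
        rw [h2, hresfn]
      · rw [if_neg hg]
        have hz' : z⁻¹ * g * z ∉ H.normalCore := fun hmem => hg ((hconjmem g).2 hmem)
        rw [chiFn_supp _ _ hz', chiFn_supp _ _ hz', add_zero]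
    rw [harg, indFn_add] at heq
    have hzN : ∀ k, k ∈ H.normalCore → z⁻¹ * k * z ∈ H.normalCore :=
      fun k hk => (hconjmem k).1 hk
    have hconjchar : conjFn z (chiFn H.normalCore D.ρ)
        = chiFn H.normalCore (D.ρ.comp (conjHom H.normalCore H.normalCore z hzN)) := by
      rw [← resFn_conjFn_eq_chiFn H.normalCore H.normalCore D.ρ z hzN]
      funext g
      rw [resFn]
      by_cases hg : g ∈ H.normalCore
      · rw [if_pos hg]
      · rw [if_neg hg, conjFn, chiFn_supp _ _ (fun hmem => hg ((hconjmem g).2 hmem))]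
    refine ⟨z, fun g => indFn H.normalCore H (conjFn z (chiFn H.normalCore D.ρ)) g + δ g,
      ?_, ?_⟩
    · refine IsCharOn.add ?_ hδchar
      rw [hconjchar]
      exact isCharOn_indFn H.normalCore H hNH _
    · rw [heq]
      funext g
      ring
  · -- part 2 : the Mackey step
    intro α hα y
    obtain ⟨V, hVs, hαeq⟩ := hα
    subst hαeq
    rw [chiFn_eq_charFn H V]
    obtain ⟨δ, hδchar, hδeq⟩ := GM H H V.ρ y
    exact ⟨δ, hδchar, hδeq⟩
end

section
/- Let λ and μ be partitions of n with n ≥ 2, and let d(λ,μ) = |[λ] \ [μ]| + |[μ] \ [λ]| = 2(n − |[λ]∩[μ]|), where [λ] denotes the Young diagram of λ. Then d(λ,μ) is the length of a shortest path from λ to μ in the bipartite branching graph of partitions of n and n+1 (with an edge between α ⊢ n+1 and λ ⊢ n iff [λ] ⊆ [α]). -/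
private lemma yd_sdiff_cards {lam mu : YoungDiagram} (h : lam.card = mu.card) :
    (mu.cells \ lam.cells).card = (lam.cells \ mu.cells).card := by
  have h1 := Finset.card_sdiff_add_card_inter lam.cells mu.cells
  have h2 := Finset.card_sdiff_add_card_inter mu.cells lam.cells
  rw [Finset.inter_comm] at h2
  simp only [YoungDiagram.card] at h
  omega

private lemma yd_exists_path (k : ℕ) : ∀ (lam mu : YoungDiagram),
    lam.card = mu.card → (lam.cells \ mu.cells).card = k →
    ∃ lams alphs : ℕ → YoungDiagram,
      lams 0 = lam ∧ lams k = mu ∧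
      (∀ i ≤ k, (lams i).card = lam.card) ∧
      (∀ i < k, (alphs i).card = lam.card + 1) ∧
      (∀ i < k, lams i ≤ alphs i ∧ lams (i + 1) ≤ alphs i) := by
  induction k with
  | zero =>
    intro lam mu hcard hk
    have hsub : lam.cells ⊆ mu.cells := by
      rw [← Finset.sdiff_eq_empty_iff_subset]
      exact Finset.card_eq_zero.mp hk
    have heq : lam = mu := by
      ext c
      exact Finset.eq_of_subset_of_card_le hsub (le_of_eq hcard.symm) ▸ Iff.rfl
    refine ⟨fun _ => lam, fun _ => lam, rfl, by rw [heq], fun i _ => rfl,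
      fun i hi => absurd hi (Nat.not_lt_zero i), fun i hi => absurd hi (Nat.not_lt_zero i)⟩
  | succ k ih =>
    intro lam mu hcard hk
    -- λ\μ is nonempty, so μ\λ is nonempty too
    have hne : (lam.cells \ mu.cells).Nonempty := by
      rw [← Finset.card_pos, hk]; omega
    have hne' : (mu.cells \ lam.cells).Nonempty := by
      rw [← Finset.card_pos, yd_sdiff_cards hcard, hk]; omega
    -- pick c' minimal in μ\λ and c maximal in λ\μ
    obtain ⟨c', hc'mem, hc'min⟩ : ∃ c' ∈ mu.cells \ lam.cells, ∀ y ∈ mu.cells \ lam.cells, ¬ y < c' := by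
      obtain ⟨i, hi⟩ := Finset.exists_minimal hne'
      exact ⟨i, hi.1, fun y hy hlt => lt_irrefl _ (lt_of_lt_of_le hlt (hi.2 hy hlt.le))⟩
    obtain ⟨c, hcmem, hcmax⟩ : ∃ c ∈ lam.cells \ mu.cells, ∀ y ∈ lam.cells \ mu.cells, ¬ c < y := by
      obtain ⟨i, hi⟩ := Finset.exists_maximal hne
      exact ⟨i, hi.1, fun y hy hlt => lt_irrefl _ (lt_of_lt_of_le hlt (hi.2 hy hlt.le))⟩
    have hc'mu : c' ∈ mu.cells := (Finset.mem_sdiff.mp hc'mem).1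
    have hc'lam : c' ∉ lam.cells := (Finset.mem_sdiff.mp hc'mem).2
    have hclam : c ∈ lam.cells := (Finset.mem_sdiff.mp hcmem).1
    have hcmu : c ∉ mu.cells := (Finset.mem_sdiff.mp hcmem).2
    have hcc' : c ≠ c' := fun h => hcmu (h ▸ hc'mu)
    -- α = λ ∪ {c'}
    have halpha_ls : IsLowerSet ((insert c' lam.cells : Finset (ℕ × ℕ)) : Set (ℕ × ℕ)) := by
      intro x y hyx hx
      simp only [Finset.coe_insert, Set.mem_insert_iff, Finset.mem_coe] at hx ⊢
      rcases hx with rfl | hx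
      · by_cases hyc : y = x
        · exact Or.inl hyc
        · right
          have hymu : y ∈ mu.cells := mu.isLowerSet hyx hc'mu
          by_contra hyl
          exact hc'min y (Finset.mem_sdiff.mpr ⟨hymu, hyl⟩) (lt_of_le_of_ne hyx hyc)
      · exact Or.inr (lam.isLowerSet hyx hx)
    set alpha : YoungDiagram := ⟨insert c' lam.cells, halpha_ls⟩ with halpha
    have halpha_card : alpha.card = lam.card + 1 := by
      simp only [YoungDiagram.card, halpha]
      rw [Finset.card_insert_of_notMem hc'lam]
    -- λ' = α \ {c}
    have hlam'_ls : IsLowerSet (((insert c' lam.cells).erase c : Finset (ℕ × ℕ)) :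
        Set (ℕ × ℕ)) := by
      intro x y hyx hx
      simp only [Finset.coe_erase, Set.mem_diff, Finset.mem_coe, Set.mem_singleton_iff] at hx ⊢
      refine ⟨halpha_ls hyx hx.1, ?_⟩
      rintro rfl
      rcases eq_or_lt_of_le hyx with rfl | hlt
      · exact hx.2 rfl
      · -- x ∈ α, x > c; if x ∈ μ then c ∈ μ; else x ∈ λ\μ contradicting maximality
        by_cases hxmu : x ∈ mu.cells
        · exact hcmu (mu.isLowerSet (le_of_lt hlt) hxmu)
        · have hxlam : x ∈ lam.cells := by
            rcases Finset.mem_insert.mp hx.1 with rfl | h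
            · exact absurd hxmu (not_not_intro hc'mu)
            · exact h
          exact hcmax x (Finset.mem_sdiff.mpr ⟨hxlam, hxmu⟩) hlt
    set lam' : YoungDiagram := ⟨(insert c' lam.cells).erase c, hlam'_ls⟩ with hlam'
    have hc_in_ins : c ∈ insert c' lam.cells := Finset.mem_insert_of_mem hclam
    have hlam'_card : lam'.card = lam.card := by
      simp only [YoungDiagram.card, hlam']
      rw [Finset.card_erase_of_mem hc_in_ins, Finset.card_insert_of_notMem hc'lam]
      omega
    -- λ' \ μ = (λ \ μ).erase c
    have hsd : lam'.cells \ mu.cells = (lam.cells \ mu.cells).erase c := by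
      ext x
      simp only [hlam', Finset.mem_sdiff, Finset.mem_erase, Finset.mem_insert]
      constructor
      · rintro ⟨⟨hx1, rfl | hx2⟩, hx3⟩
        · exact absurd hx3 (not_not_intro hc'mu)
        · exact ⟨hx1, hx2, hx3⟩
      · rintro ⟨hx1, hx2, hx3⟩
        exact ⟨⟨hx1, Or.inr hx2⟩, hx3⟩
    have hsd_card : (lam'.cells \ mu.cells).card = k := by
      rw [hsd, Finset.card_erase_of_mem (Finset.mem_sdiff.mpr ⟨hclam, hcmu⟩), hk]
      omega
    obtain ⟨lams', alphs', h0, hK, hcards, hacards, hedges⟩ :=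
      ih lam' mu (hlam'_card.trans hcard) hsd_card
    refine ⟨fun i => Nat.casesOn i lam (fun j => lams' j),
            fun i => Nat.casesOn i alpha (fun j => alphs' j), rfl, hK, ?_, ?_, ?_⟩
    · intro i hi
      cases i with
      | zero => rfl
      | succ j => exact (hcards j (by omega)).trans hlam'_card
    · intro i hi
      cases i with
      | zero => exact halpha_card
      | succ j => exact (hacards j (by omega)).trans (by rw [hlam'_card])
    · intro i hi
      cases i with
      | zero =>
        constructor
        · intro x hx
          exact Finset.mem_insert_of_mem hx
        · show lams' 0 ≤ alpha
          rw [h0]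
          intro x hx
          exact Finset.mem_of_mem_erase hx
      | succ j => exact hedges j (by omega)

private lemma yd_step_bound {n : ℕ} {a b al : YoungDiagram} (ha : a.card = n)
    (hb : b.card = n) (hal : al.card = n + 1) (h1 : a ≤ al) (h2 : b ≤ al) :
    (a.cells \ b.cells).card + (b.cells \ a.cells).card ≤ 2 := by
  have k1 : (a.cells \ b.cells).card ≤ 1 := by
    calc (a.cells \ b.cells).card ≤ (al.cells \ b.cells).card :=
          Finset.card_le_card (Finset.sdiff_subset_sdiff h1 le_rfl)
      _ = 1 := by rw [Finset.card_sdiff_of_subset h2]; simp [YoungDiagram.card] at ha hb hal; omega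
  have k2 : (b.cells \ a.cells).card ≤ 1 := by
    calc (b.cells \ a.cells).card ≤ (al.cells \ a.cells).card :=
          Finset.card_le_card (Finset.sdiff_subset_sdiff h2 le_rfl)
      _ = 1 := by rw [Finset.card_sdiff_of_subset h1]; simp [YoungDiagram.card] at ha hb hal; omega
  omega

private lemma yd_triangle (A B C : Finset (ℕ × ℕ)) :
    (A \ C).card + (C \ A).card ≤
      ((A \ B).card + (B \ A).card) + ((B \ C).card + (C \ B).card) := by
  have h1 : (A \ C).card ≤ (A \ B).card + (B \ C).card := by
    calc (A \ C).card ≤ ((A \ B) ∪ (B \ C)).card := by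
          apply Finset.card_le_card
          intro x hx
          rw [Finset.mem_sdiff] at hx
          by_cases hxb : x ∈ B
          · exact Finset.mem_union_right _ (Finset.mem_sdiff.mpr ⟨hxb, hx.2⟩)
          · exact Finset.mem_union_left _ (Finset.mem_sdiff.mpr ⟨hx.1, hxb⟩)
      _ ≤ (A \ B).card + (B \ C).card := Finset.card_union_le _ _
  have h2 : (C \ A).card ≤ (C \ B).card + (B \ A).card := by
    calc (C \ A).card ≤ ((C \ B) ∪ (B \ A)).card := by
          apply Finset.card_le_card
          intro x hx
          rw [Finset.mem_sdiff] at hx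
          by_cases hxb : x ∈ B
          · exact Finset.mem_union_right _ (Finset.mem_sdiff.mpr ⟨hxb, hx.2⟩)
          · exact Finset.mem_union_left _ (Finset.mem_sdiff.mpr ⟨hx.1, hxb⟩)
      _ ≤ (C \ B).card + (B \ A).card := Finset.card_union_le _ _
  omega

private lemma yd_lower_bound (n : ℕ) (m : ℕ) : ∀ (lams alphs : ℕ → YoungDiagram),
    (∀ i ≤ m, (lams i).card = n) → (∀ i < m, (alphs i).card = n + 1) →
    (∀ i < m, lams i ≤ alphs i ∧ lams (i + 1) ≤ alphs i) →
    ((lams 0).cells \ (lams m).cells).card + ((lams m).cells \ (lams 0).cells).card ≤ 2 * m := by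
  induction m with
  | zero =>
    intro lams alphs _ _ _
    simp
  | succ m ih =>
    intro lams alphs hc hac he
    have IH := ih lams alphs (fun i hi => hc i (by omega)) (fun i hi => hac i (by omega))
      (fun i hi => he i (by omega))
    have step := yd_step_bound (hc m (by omega)) (hc (m + 1) le_rfl) (hac m (by omega))
      (he m (by omega)).1 (he m (by omega)).2
    have tri := yd_triangle (lams 0).cells (lams m).cells (lams (m + 1)).cells
    omega

/-- For partitions `λ, μ` of `n ≥ 2` (identified with Young
diagrams with `n` cells), the quantity
`d(λ,μ) = |[λ]\[μ]| + |[μ]\[λ]| = 2(n − |[λ]∩[μ]|)` is the length of a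
shortest path from `λ` to `μ` in the bipartite branching graph on partitions
of `n` and `n+1` (an edge joining `α ⊢ n+1` and `ν ⊢ n` iff `[ν] ⊆ [α]`). -/
theorem branching_graph_dist (n : ℕ) (hn : 2 ≤ n) (lam mu : YoungDiagram)
    (hl : lam.card = n) (hm : mu.card = n) :
    IsLeast
      {L : ℕ | ∃ (m : ℕ) (lams alphs : ℕ → YoungDiagram),
        L = 2 * m ∧ lams 0 = lam ∧ lams m = mu ∧
        (∀ i ≤ m, (lams i).card = n) ∧
        (∀ i < m, (alphs i).card = n + 1) ∧
        (∀ i < m, lams i ≤ alphs i ∧ lams (i + 1) ≤ alphs i)}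
      ((lam.cells \ mu.cells).card + (mu.cells \ lam.cells).card) := by
  have hcards : (mu.cells \ lam.cells).card = (lam.cells \ mu.cells).card :=
    yd_sdiff_cards (hl.trans hm.symm)
  constructor
  · -- membership
    obtain ⟨lams, alphs, h0, hK, hcc, hac, he⟩ :=
      yd_exists_path (lam.cells \ mu.cells).card lam mu (hl.trans hm.symm) rfl
    exact ⟨(lam.cells \ mu.cells).card, lams, alphs, by omega, h0, hK,
      fun i hi => (hcc i hi).trans hl, fun i hi => (hac i hi).trans (by rw [hl]),
      he⟩
  · -- lower bound
    rintro L ⟨m, lams, alphs, rfl, h0, hK, hcc, hac, he⟩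
    have := yd_lower_bound n m lams alphs hcc hac he
    rw [h0, hK] at this
    omega
end

section
/- Let n ≥ 4 and let a = (1,2,...,n) be an n-cycle in the symmetric group S_n. Set g = (2,n−2)(n−1,n) and ã = g·a·g^{-1}. Then the cyclic subgroups ⟨a⟩ and ⟨ã⟩ intersect trivially: ⟨a⟩ ∩ ⟨ã⟩ = {1}. In particular, the cyclic subgroup ⟨a⟩ ≤ S_n has a conjugate meeting it trivially. -/
private lemma mod2_cases {n a : ℕ} (h : a < 2 * n) : a % n = a ∨ a % n = a - n := by
  rcases Nat.lt_or_ge a n with h' | h'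
  · left; exact Nat.mod_eq_of_lt h'
  · right; rw [Nat.mod_eq_sub_mod h', Nat.mod_eq_of_lt (by omega)]

open Fin.NatCast Fin.CommRing in
private lemma finRotate_pow_apply' (n j : ℕ) (x : Fin (n+1)) :
    (finRotate (n+1) ^ j) x = x + (j : Fin (n+1)) := by
  induction j generalizing x with
  | zero => simp
  | succ j ih =>
    rw [pow_succ, Equiv.Perm.mul_apply, finRotate_succ_apply, ih]
    push_cast
    ring

private lemma key4 : ∀ k m : Fin 4, (∀ x : Fin 4,
      (Equiv.swap (⟨1, by omega⟩ : Fin 4) ⟨4 - 3, by omega⟩ *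
       Equiv.swap (⟨4 - 2, by omega⟩ : Fin 4) ⟨4 - 1, by omega⟩) (x + k) =
      (Equiv.swap (⟨1, by omega⟩ : Fin 4) ⟨4 - 3, by omega⟩ *
       Equiv.swap (⟨4 - 2, by omega⟩ : Fin 4) ⟨4 - 1, by omega⟩) x + m) →
    k = ⟨0, by omega⟩ := by decide

private lemma key5 : ∀ k m : Fin 5, (∀ x : Fin 5,
      (Equiv.swap (⟨1, by omega⟩ : Fin 5) ⟨5 - 3, by omega⟩ *
       Equiv.swap (⟨5 - 2, by omega⟩ : Fin 5) ⟨5 - 1, by omega⟩) (x + k) =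
      (Equiv.swap (⟨1, by omega⟩ : Fin 5) ⟨5 - 3, by omega⟩ *
       Equiv.swap (⟨5 - 2, by omega⟩ : Fin 5) ⟨5 - 1, by omega⟩) x + m) →
    k = ⟨0, by omega⟩ := by decide

private lemma key6 : ∀ k m : Fin 6, (∀ x : Fin 6,
      (Equiv.swap (⟨1, by omega⟩ : Fin 6) ⟨6 - 3, by omega⟩ *
       Equiv.swap (⟨6 - 2, by omega⟩ : Fin 6) ⟨6 - 1, by omega⟩) (x + k) =
      (Equiv.swap (⟨1, by omega⟩ : Fin 6) ⟨6 - 3, by omega⟩ *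
       Equiv.swap (⟨6 - 2, by omega⟩ : Fin 6) ⟨6 - 1, by omega⟩) x + m) →
    k = ⟨0, by omega⟩ := by decide

private lemma key7 : ∀ k m : Fin 7, (∀ x : Fin 7,
      (Equiv.swap (⟨1, by omega⟩ : Fin 7) ⟨7 - 3, by omega⟩ *
       Equiv.swap (⟨7 - 2, by omega⟩ : Fin 7) ⟨7 - 1, by omega⟩) (x + k) =
      (Equiv.swap (⟨1, by omega⟩ : Fin 7) ⟨7 - 3, by omega⟩ *
       Equiv.swap (⟨7 - 2, by omega⟩ : Fin 7) ⟨7 - 1, by omega⟩) x + m) →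
    k = ⟨0, by omega⟩ := by decide

private lemma key8 : ∀ k m : Fin 8, (∀ x : Fin 8,
      (Equiv.swap (⟨1, by omega⟩ : Fin 8) ⟨8 - 3, by omega⟩ *
       Equiv.swap (⟨8 - 2, by omega⟩ : Fin 8) ⟨8 - 1, by omega⟩) (x + k) =
      (Equiv.swap (⟨1, by omega⟩ : Fin 8) ⟨8 - 3, by omega⟩ *
       Equiv.swap (⟨8 - 2, by omega⟩ : Fin 8) ⟨8 - 1, by omega⟩) x + m) →
    k = ⟨0, by omega⟩ := by decide

open Fin.CommRing in
private lemma key_lemma (n : ℕ) (hn : 4 ≤ n) :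
    ∀ k m : Fin n, (∀ x : Fin n,
      (Equiv.swap (⟨1, Nat.lt_of_lt_of_le (by norm_num) hn⟩ : Fin n) ⟨n - 3, Nat.sub_lt (by omega) (by norm_num)⟩ *
       Equiv.swap (⟨n - 2, Nat.sub_lt (by omega) (by norm_num)⟩ : Fin n) ⟨n - 1, Nat.sub_lt (by omega) (by norm_num)⟩) (x + k) =
      (Equiv.swap (⟨1, Nat.lt_of_lt_of_le (by norm_num) hn⟩ : Fin n) ⟨n - 3, Nat.sub_lt (by omega) (by norm_num)⟩ *
       Equiv.swap (⟨n - 2, Nat.sub_lt (by omega) (by norm_num)⟩ : Fin n) ⟨n - 1, Nat.sub_lt (by omega) (by norm_num)⟩) x + m) →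
    k = ⟨0, by omega⟩ := by
  haveI : NeZero n := ⟨by omega⟩
  rcases le_or_gt n 8 with hsmall | hbig
  · interval_cases n
    exacts [key4, key5, key6, key7, key8]
  · -- generic case n ≥ 9
    have h9 : 9 ≤ n := hbig
    intro k m h
    obtain ⟨s1, s2, s3, s4, vs1, vs2, vs3, vs4, h'⟩ :
        ∃ s1 s2 s3 s4 : Fin n, s1.val = 1 ∧ s2.val = n - 3 ∧ s3.val = n - 2 ∧
          s4.val = n - 1 ∧ ∀ x : Fin n,
            (Equiv.swap s1 s2 * Equiv.swap s3 s4) (x + k) =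
            (Equiv.swap s1 s2 * Equiv.swap s3 s4) x + m :=
      ⟨_, _, _, _, rfl, rfl, rfl, rfl, h⟩
    clear h
    have ne13 : s1 ≠ s3 := Fin.ne_of_val_ne (by omega)
    have ne14 : s1 ≠ s4 := Fin.ne_of_val_ne (by omega)
    have ne23 : s2 ≠ s3 := Fin.ne_of_val_ne (by omega)
    have ne24 : s2 ≠ s4 := Fin.ne_of_val_ne (by omega)
    have hG : ∀ x : Fin n, x ≠ s1 → x ≠ s2 → x ≠ s3 → x ≠ s4 →
        (Equiv.swap s1 s2 * Equiv.swap s3 s4) x = x := by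
      intro x h1 h2 h3 h4
      rw [Equiv.Perm.mul_apply, Equiv.swap_apply_of_ne_of_ne h3 h4,
        Equiv.swap_apply_of_ne_of_ne h1 h2]
    have hGs1 : (Equiv.swap s1 s2 * Equiv.swap s3 s4) s1 = s2 := by
      rw [Equiv.Perm.mul_apply, Equiv.swap_apply_of_ne_of_ne ne13 ne14,
        Equiv.swap_apply_left]
    have hGs2 : (Equiv.swap s1 s2 * Equiv.swap s3 s4) s2 = s1 := by
      rw [Equiv.Perm.mul_apply, Equiv.swap_apply_of_ne_of_ne ne23 ne24,
        Equiv.swap_apply_right]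
    have hGs3 : (Equiv.swap s1 s2 * Equiv.swap s3 s4) s3 = s4 := by
      rw [Equiv.Perm.mul_apply, Equiv.swap_apply_left,
        Equiv.swap_apply_of_ne_of_ne (Ne.symm ne14) (Ne.symm ne24)]
    have hGs4 : (Equiv.swap s1 s2 * Equiv.swap s3 s4) s4 = s3 := by
      rw [Equiv.Perm.mul_apply, Equiv.swap_apply_right,
        Equiv.swap_apply_of_ne_of_ne (Ne.symm ne13) (Ne.symm ne23)]
    -- Step A : k = m
    have hkm : k = m := by
      set L : List (Fin n) := [s1, s2, s3, s4, s1 - k, s2 - k, s3 - k, s4 - k] with hL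
      have hcard : 0 < L.toFinsetᶜ.card := by
        have h8 : L.toFinset.card ≤ 8 := L.toFinset_card_le
        rw [Finset.card_compl, Fintype.card_fin]
        omega
      obtain ⟨x, hx⟩ := Finset.card_pos.mp hcard
      rw [Finset.mem_compl, List.mem_toFinset] at hx
      simp only [hL, List.mem_cons, List.not_mem_nil, or_false, not_or] at hx
      obtain ⟨x1, x2, x3, x4, x5, x6, x7, x8⟩ := hx
      have hxk : ∀ s : Fin n, x ≠ s - k → x + k ≠ s := by
        intro s hne hcontra
        exact hne (eq_sub_of_add_eq hcontra)
      have e1 : (Equiv.swap s1 s2 * Equiv.swap s3 s4) (x + k) = x + k :=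
        hG _ (hxk _ x5) (hxk _ x6) (hxk _ x7) (hxk _ x8)
      have e2 : (Equiv.swap s1 s2 * Equiv.swap s3 s4) x = x := hG _ x1 x2 x3 x4
      have := h' x
      rw [e1, e2] at this
      exact add_left_cancel (a := x) this
    subst hkm
    -- Step B
    have e0 : s1 - k + k = s1 := sub_add_cancel s1 k
    have E : s2 = (Equiv.swap s1 s2 * Equiv.swap s3 s4) (s1 - k) + k := by
      have := h' (s1 - k)
      rw [e0, hGs1] at this
      exact this
    by_cases c1 : s1 - k = s1
    · have : k = 0 := sub_eq_self.mp c1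
      rw [this]
      rfl
    by_cases c2 : s1 - k = s2
    · exfalso
      rw [c2, hGs2] at E
      have hk' : s1 = s2 + k := sub_eq_iff_eq_add.mp c2
      have hsum : s2 + s2 = s1 + s1 := by linear_combination E - hk'
      have hv := congrArg Fin.val hsum
      rw [Fin.val_add, Fin.val_add] at hv
      rcases mod2_cases (show s2.val + s2.val < 2 * n by omega) with hc | hc <;>
        rcases mod2_cases (show s1.val + s1.val < 2 * n by omega) with hc' | hc' <;> omega
    by_cases c3 : s1 - k = s3
    · exfalso
      rw [c3, hGs3] at E
      have hk' : s1 = s3 + k := sub_eq_iff_eq_add.mp c3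
      have hsum : s2 + s3 = s4 + s1 := by linear_combination E - hk'
      have hv := congrArg Fin.val hsum
      rw [Fin.val_add, Fin.val_add] at hv
      rcases mod2_cases (show s2.val + s3.val < 2 * n by omega) with hc | hc <;>
        rcases mod2_cases (show s4.val + s1.val < 2 * n by omega) with hc' | hc' <;> omega
    by_cases c4 : s1 - k = s4
    · exfalso
      rw [c4, hGs4] at E
      have hk' : s1 = s4 + k := sub_eq_iff_eq_add.mp c4
      have hsum : s2 + s4 = s3 + s1 := by linear_combination E - hk'
      have hv := congrArg Fin.val hsum
      rw [Fin.val_add, Fin.val_add] at hv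
      rcases mod2_cases (show s2.val + s4.val < 2 * n by omega) with hc | hc <;>
        rcases mod2_cases (show s3.val + s1.val < 2 * n by omega) with hc' | hc' <;> omega
    · exfalso
      rw [hG _ c1 c2 c3 c4, e0] at E
      have hv := congrArg Fin.val E
      omega

/-- Let `n ≥ 4`, let `a = (1,2,…,n)` be the standard `n`-cycle
in `S_n` (here `finRotate n` on `Fin n`), and let `g = (2,n−2)(n−1,n)` (in
zero-based labels the product of the swaps `(1, n−3)` and `(n−2, n−1)`).
Then the cyclic subgroups generated by `a` and by its conjugate
`ã = g a g⁻¹` intersect trivially. -/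
theorem cyclic_conjugate_trivial_intersection (n : ℕ) (hn : 4 ≤ n) :
    Subgroup.zpowers (finRotate n) ⊓
      Subgroup.zpowers
        ((Equiv.swap (⟨1, by omega⟩ : Fin n) ⟨n - 3, by omega⟩ *
            Equiv.swap (⟨n - 2, by omega⟩ : Fin n) ⟨n - 1, by omega⟩) *
          finRotate n *
          (Equiv.swap (⟨1, by omega⟩ : Fin n) ⟨n - 3, by omega⟩ *
            Equiv.swap (⟨n - 2, by omega⟩ : Fin n) ⟨n - 1, by omega⟩)⁻¹) = ⊥ := by
  obtain ⟨N, rfl⟩ : ∃ N, n = N + 1 := ⟨n - 1, by omega⟩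
  rw [eq_bot_iff]
  intro x hx
  obtain ⟨hx1, hx2⟩ := Subgroup.mem_inf.mp hx
  rw [← mem_powers_iff_mem_zpowers] at hx1 hx2
  obtain ⟨k, hk⟩ := hx1
  obtain ⟨m, hm⟩ := hx2
  beta_reduce at hk hm
  rw [conj_pow] at hm
  have hcomm := hm.trans hk.symm
  rw [mul_inv_eq_iff_eq_mul] at hcomm
  open Fin.NatCast in
  have hfun : ∀ y : Fin (N+1),
      (Equiv.swap (⟨1, by omega⟩ : Fin (N+1)) ⟨(N+1) - 3, by omega⟩ *
       Equiv.swap (⟨(N+1) - 2, by omega⟩ : Fin (N+1)) ⟨(N+1) - 1, by omega⟩)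
         (y + (m : Fin (N+1))) =
      (Equiv.swap (⟨1, by omega⟩ : Fin (N+1)) ⟨(N+1) - 3, by omega⟩ *
       Equiv.swap (⟨(N+1) - 2, by omega⟩ : Fin (N+1)) ⟨(N+1) - 1, by omega⟩) y
        + (k : Fin (N+1)) := by
    intro y
    have h2 := DFunLike.congr_fun hcomm y
    simp only [Equiv.Perm.mul_apply, finRotate_pow_apply'] at h2
    simp only [Equiv.Perm.mul_apply]
    exact h2
  open Fin.NatCast in
  have hm0 : (m : Fin (N+1)) = 0 := by
    have := key_lemma (N+1) (by omega) _ _ hfun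
    rw [this]
    rfl
  have ha1 : (finRotate (N+1)) ^ m = 1 := by
    ext y
    simp [finRotate_pow_apply', hm0]
  rw [Subgroup.mem_bot, ← hm, ha1, mul_one, mul_inv_cancel]
end

section
/- Let n > 5 and let H = D_{2n} be the dihedral subgroup of S_n of order 2n generated by a = (1,2,...,n) and b = (1,n)(2,n−1)···(⌊n/2⌋,⌈(n+2)/2⌉). Setting g = (2,n−2)(n−1,n), the subgroup H and its conjugate H^g = gHg^{-1} intersect trivially: H ∩ H^g = {1}. -/
open Fin.CommRing Fin.NatCast

namespace Dih19

variable {n : ℕ} [NeZero n]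

lemma cast_zero_dvd {k : ℕ} (h : ((k : ℕ) : Fin n) = 0) : n ∣ k := by
  rw [Fin.ext_iff, Fin.val_natCast, Fin.val_zero] at h
  exact Nat.dvd_of_mod_eq_zero h

lemma lit_contra (hn : 5 < n) (k : ℕ) (h : ((k : ℕ) : Fin n) = 0)
    (h0 : 0 < k := by norm_num) (h5 : k < 6 := by norm_num) : False := by
  have := Nat.le_of_dvd h0 (cast_zero_dvd h); omega

lemma lit_ne (hn : 5 < n) (k : ℕ) {a b : Fin n}
    (hab : a - b = (k : ℕ) := by push_cast; ring)
    (h0 : 0 < k := by norm_num) (h5 : k < 6 := by norm_num) : a ≠ b := by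
  intro h
  exact lit_contra hn k (by rw [← hab, h, sub_self]) h0 h5

lemma cast_self : ((n : ℕ) : Fin n) = 0 := by
  rw [Fin.ext_iff, Fin.val_natCast, Nat.mod_self, Fin.val_zero]

lemma cast_n_sub (k : ℕ) (hk : k ≤ n) : ((n - k : ℕ) : Fin n) = -((k : ℕ) : Fin n) := by
  refine eq_neg_of_add_eq_zero_left ?_
  rw [← Nat.cast_add, show n - k + k = n from by omega, cast_self]

lemma mk_cast (i : ℕ) (h : i < n) : (⟨i, h⟩ : Fin n) = ((i : ℕ) : Fin n) := by
  rw [Fin.ext_iff, Fin.val_natCast, Nat.mod_eq_of_lt h]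

/-- every element of the dihedral closure is affine: `x ↦ x + c` or `x ↦ -x + c`. -/
lemma affine_of_mem {a b : Equiv.Perm (Fin n)}
    (ha : ∀ x, a x = x + 1) (hb : ∀ x, b x = -x - 1) {h : Equiv.Perm (Fin n)}
    (hh : h ∈ Subgroup.closure {a, b}) :
    ∃ c : Fin n, (∀ x, h x = x + c) ∨ (∀ x, h x = -x + c) := by
  induction hh using Subgroup.closure_induction with
  | mem x hx =>
    simp only [Set.mem_insert_iff, Set.mem_singleton_iff] at hx
    rcases hx with rfl | rfl
    · exact ⟨1, Or.inl ha⟩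
    · exact ⟨-1, Or.inr fun x => by rw [hb]; ring⟩
  | one => exact ⟨0, Or.inl fun x => by simp⟩
  | mul x y hx hy ihx ihy =>
    obtain ⟨c, hc⟩ := ihx; obtain ⟨d, hd⟩ := ihy
    rcases hc with hc | hc <;> rcases hd with hd | hd
    · exact ⟨d + c, Or.inl fun z => by
        rw [Equiv.Perm.mul_apply, hd, hc]; ring⟩
    · exact ⟨d + c, Or.inr fun z => by
        rw [Equiv.Perm.mul_apply, hd, hc]; ring⟩
    · exact ⟨-d + c, Or.inr fun z => by
        rw [Equiv.Perm.mul_apply, hd, hc]; ring⟩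
    · exact ⟨-d + c, Or.inl fun z => by
        rw [Equiv.Perm.mul_apply, hd, hc]; ring⟩
  | inv x hx ih =>
    obtain ⟨c, hc | hc⟩ := ih
    · refine ⟨-c, Or.inl fun z => ?_⟩
      have h2 := hc (x⁻¹ z)
      rw [show x (x⁻¹ z) = z from x.apply_symm_apply z] at h2
      rw [show x⁻¹ z = (x⁻¹ : Equiv.Perm (Fin n)) z from rfl] at h2 ⊢
      linear_combination -h2
    · refine ⟨c, Or.inr fun z => ?_⟩
      have h2 := hc (x⁻¹ z)
      rw [show x (x⁻¹ z) = z from x.apply_symm_apply z] at h2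
      linear_combination h2

section G
variable {g : Equiv.Perm (Fin n)} (hn : 5 < n)
variable (hg1 : g 1 = -3) (hg2 : g (-3) = 1) (hg3 : g (-2) = -1) (hg4 : g (-1) = -2)
variable (hgid : ∀ y : Fin n, y ≠ 1 → y ≠ -3 → y ≠ -2 → y ≠ -1 → g y = y)

include hn hgid in
lemma g_zero : g 0 = 0 :=
  hgid 0 (lit_ne hn 1).symm (lit_ne hn 3) (lit_ne hn 2) (lit_ne hn 1)

include hn hgid in
lemma g_two : g 2 = 2 :=
  hgid 2 (lit_ne hn 1) (lit_ne hn 5) (lit_ne hn 4) (lit_ne hn 3)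

include hn hg1 hg2 hg3 hg4 hgid in
lemma delta (y : Fin n) :
    (y = 0 ∧ g (y + 1) - g y = -3) ∨ (y = 1 ∧ g (y + 1) - g y = 5) ∨
    (y = -4 ∧ g (y + 1) - g y = 5) ∨ (y = -3 ∧ g (y + 1) - g y = -2) ∨
    (y = -2 ∧ g (y + 1) - g y = -1) ∨ (y = -1 ∧ g (y + 1) - g y = 2) ∨
    (g (y + 1) - g y = 1) := by
  have hg0 : g 0 = 0 := g_zero hn hgid
  have hg2' : g 2 = 2 := g_two hn hgid
  by_cases h0 : y = 0
  · subst h0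
    refine Or.inl ⟨rfl, ?_⟩
    rw [show (0 : Fin n) + 1 = 1 from by ring, hg1, hg0]; ring
  by_cases h1 : y = 1
  · subst h1
    refine Or.inr (Or.inl ⟨rfl, ?_⟩)
    rw [show (1 : Fin n) + 1 = 2 from by ring, hg2', hg1]; ring
  by_cases h4 : y = -4
  · subst h4
    refine Or.inr (Or.inr (Or.inl ⟨rfl, ?_⟩))
    rw [show (-4 : Fin n) + 1 = -3 from by ring, hg2]
    rw [hgid (-4) (lit_ne hn 5).symm (lit_ne hn 1).symm (lit_ne hn 2).symm
      (lit_ne hn 3).symm]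
    ring
  by_cases h3 : y = -3
  · subst h3
    refine Or.inr (Or.inr (Or.inr (Or.inl ⟨rfl, ?_⟩)))
    rw [show (-3 : Fin n) + 1 = -2 from by ring, hg3, hg2]; ring
  by_cases h2 : y = -2
  · subst h2
    refine Or.inr (Or.inr (Or.inr (Or.inr (Or.inl ⟨rfl, ?_⟩))))
    rw [show (-2 : Fin n) + 1 = -1 from by ring, hg4, hg3]; ring
  by_cases hm1 : y = -1
  · subst hm1
    refine Or.inr (Or.inr (Or.inr (Or.inr (Or.inr (Or.inl ⟨rfl, ?_⟩)))))
    rw [show (-1 : Fin n) + 1 = 0 from by ring, hg0, hg4]; ring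
  · refine Or.inr (Or.inr (Or.inr (Or.inr (Or.inr (Or.inr ?_)))))
    rw [hgid y h1 h3 h2 hm1]
    rw [hgid (y + 1) (fun h => h0 (by linear_combination h))
      (fun h => h4 (by linear_combination h)) (fun h => h3 (by linear_combination h))
      (fun h => h2 (by linear_combination h))]
    ring

include hn hg1 hg2 hg3 hg4 hgid in
lemma caseE1 {c d : Fin n} (E : ∀ x : Fin n, g x + c = g (x + d)) : c = 0 := by
  have hg0 : g 0 = 0 := g_zero hn hgid
  have hg2' : g 2 = 2 := g_two hn hgid
  have h1 := E (-2 - d)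
  have h2 := E (-1 - d)
  rw [show (-2 - d + d : Fin n) = -2 from by ring, hg3] at h1
  rw [show (-1 - d + d : Fin n) = -1 from by ring, hg4] at h2
  rw [show (-1 - d : Fin n) = -2 - d + 1 from by ring] at h2
  have hD : g ((-2 - d) + 1) - g (-2 - d) = -1 := by linear_combination h2 - h1
  rcases delta hn hg1 hg2 hg3 hg4 hgid (-2 - d) with ⟨hy, hD'⟩ | ⟨hy, hD'⟩ | ⟨hy, hD'⟩ |
    ⟨hy, hD'⟩ | ⟨hy, hD'⟩ | ⟨hy, hD'⟩ | hD'
  · exact (lit_contra hn 2 (by push_cast; first | linear_combination hD - hD' | linear_combination hD' - hD)).elim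
  · -- d = -3
    have hd : d = -3 := by linear_combination -hy
    have e0 := E 0
    rw [show (0 : Fin n) + d = -3 from by linear_combination hd, hg2, hg0] at e0
    have e2 := E 2
    rw [show (2 : Fin n) + d = -1 from by linear_combination hd, hg4, hg2'] at e2
    exact (lit_contra hn 5 (by push_cast; first | linear_combination e2 - e0 | linear_combination e0 - e2)).elim
  · -- d = 2, n = 6
    have hd : d = 2 := by linear_combination -hy
    have h6 : (6 : Fin n) = 0 := by first | linear_combination hD - hD' | linear_combination hD' - hD
    have e0 := E 0
    rw [show (0 : Fin n) + d = 2 from by linear_combination hd, hg2', hg0] at e0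
    have e2 := E 2
    rw [show (2 : Fin n) + d = -2 from by linear_combination hd + h6, hg3, hg2'] at e2
    exact (lit_contra hn 5 (by push_cast; first | linear_combination e2 - e0 | linear_combination e0 - e2)).elim
  · exact (lit_contra hn 1 (by push_cast; first | linear_combination hD - hD' | linear_combination hD' - hD)).elim
  · -- d = 0 : good case
    have hd : d = 0 := by linear_combination -hy
    have e0 := E 0
    rw [show (0 : Fin n) + d = 0 from by linear_combination hd] at e0
    linear_combination e0
  · exact (lit_contra hn 3 (by push_cast; first | linear_combination hD - hD' | linear_combination hD' - hD)).elim
  · exact (lit_contra hn 2 (by push_cast; first | linear_combination hD - hD' | linear_combination hD' - hD)).elim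

include hn hg1 hg2 hg3 hg4 hgid in
lemma caseE2 {c d : Fin n} (E : ∀ x : Fin n, g x + c = g (-x + d)) : False := by
  have hg0 : g 0 = 0 := g_zero hn hgid
  have hg2' : g 2 = 2 := g_two hn hgid
  have h1 := E 0
  have h2 := E 1
  rw [hg0, show -(0 : Fin n) + d = (-1 + d) + 1 from by ring] at h1
  rw [hg1] at h2
  have hD : g ((-1 + d) + 1) - g (-1 + d) = 3 := by
    first | linear_combination h1 - h2 | linear_combination h2 - h1
  rcases delta hn hg1 hg2 hg3 hg4 hgid (-1 + d) with ⟨hy, hD'⟩ | ⟨hy, hD'⟩ | ⟨hy, hD'⟩ |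
    ⟨hy, hD'⟩ | ⟨hy, hD'⟩ | ⟨hy, hD'⟩ | hD'
  · -- d = 1
    have hd : d = 1 := by linear_combination hy
    rw [show (-1 + d) + 1 = (1 : Fin n) from by linear_combination hd, hg1] at h1
    have e2 := E 2
    rw [hg2', show -(2 : Fin n) + d = -1 from by linear_combination hd, hg4] at e2
    exact lit_contra hn 1 (by
      push_cast
      first
      | linear_combination e2 - h1
      | linear_combination h1 - e2)
  · exact lit_contra hn 2 (by
      push_cast
      first
      | linear_combination hD - hD'
      | linear_combination hD' - hD)
  · exact lit_contra hn 2 (by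
      push_cast
      first
      | linear_combination hD - hD'
      | linear_combination hD' - hD)
  · exact lit_contra hn 5 (by
      push_cast
      first
      | linear_combination hD - hD'
      | linear_combination hD' - hD)
  · exact lit_contra hn 4 (by
      push_cast
      first
      | linear_combination hD - hD'
      | linear_combination hD' - hD)
  · exact lit_contra hn 1 (by
      push_cast
      first
      | linear_combination hD - hD'
      | linear_combination hD' - hD)
  · exact lit_contra hn 2 (by
      push_cast
      first
      | linear_combination hD - hD'
      | linear_combination hD' - hD)

include hn hg1 hg2 hg3 hg4 hgid in
lemma caseE3 {c d : Fin n} (E : ∀ x : Fin n, -(g x) + c = g (x + d)) : False := by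
  have hg0 : g 0 = 0 := g_zero hn hgid
  have hg2' : g 2 = 2 := g_two hn hgid
  have h1 := E 0
  have h2 := E (-1)
  rw [hg0, show (0 : Fin n) + d = (-1 + d) + 1 from by ring] at h1
  rw [hg4] at h2
  have hD : g ((-1 + d) + 1) - g (-1 + d) = -2 := by
    first | linear_combination h1 - h2 | linear_combination h2 - h1
  rcases delta hn hg1 hg2 hg3 hg4 hgid (-1 + d) with ⟨hy, hD'⟩ | ⟨hy, hD'⟩ | ⟨hy, hD'⟩ |
    ⟨hy, hD'⟩ | ⟨hy, hD'⟩ | ⟨hy, hD'⟩ | hD'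
  · exact lit_contra hn 1 (by
      push_cast
      first
      | linear_combination hD - hD'
      | linear_combination hD' - hD)
  · -- n = 7, d = 2
    have hd : d = 2 := by linear_combination hy
    have h7 : ((7 : ℕ) : Fin n) = 0 := by
      push_cast
      first
      | linear_combination hD - hD'
      | linear_combination hD' - hD
    rw [show (-1 + d) + 1 = (2 : Fin n) from by linear_combination hd, hg2'] at h1
    have e1 := E 1
    rw [hg1, show (1 : Fin n) + d = 3 from by linear_combination hd] at e1
    rw [hgid 3 (lit_ne hn 2)
      (fun h => lit_contra hn 1 (by
        push_cast
        first
        | linear_combination h7 - h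
        | linear_combination h - h7))
      (lit_ne hn 5) (lit_ne hn 4)] at e1
    exact lit_contra hn 2 (by
      push_cast
      first
      | linear_combination e1 - h1
      | linear_combination h1 - e1)
  · -- n = 7, d = -3
    have hd : d = -3 := by linear_combination hy
    rw [show (-1 + d) + 1 = (-3 : Fin n) from by linear_combination hd, hg2] at h1
    have e1 := E 1
    rw [hg1, show (1 : Fin n) + d = -2 from by linear_combination hd, hg3] at e1
    exact lit_contra hn 5 (by
      push_cast
      first
      | linear_combination e1 - h1
      | linear_combination h1 - e1)
  · -- d = -2
    have hd : d = -2 := by linear_combination hy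
    rw [show (-1 + d) + 1 = (-2 : Fin n) from by linear_combination hd, hg3] at h1
    have e2 := E 2
    rw [hg2', show (2 : Fin n) + d = 0 from by linear_combination hd, hg0] at e2
    exact lit_contra hn 3 (by
      push_cast
      first
      | linear_combination e2 - h1
      | linear_combination h1 - e2)
  · exact lit_contra hn 1 (by
      push_cast
      first
      | linear_combination hD - hD'
      | linear_combination hD' - hD)
  · exact lit_contra hn 4 (by
      push_cast
      first
      | linear_combination hD - hD'
      | linear_combination hD' - hD)
  · exact lit_contra hn 3 (by
      push_cast
      first
      | linear_combination hD - hD'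
      | linear_combination hD' - hD)

include hn hg1 hg2 hg3 hg4 hgid in
lemma caseE4 {c d : Fin n} (E : ∀ x : Fin n, -(g x) + c = g (-x + d)) : False := by
  have hg0 : g 0 = 0 := g_zero hn hgid
  have hg2' : g 2 = 2 := g_two hn hgid
  have h1 := E (-1)
  have h2 := E (-2)
  rw [hg4, show -(-1 : Fin n) + d = 1 + d from by ring] at h1
  rw [hg3, show -(-2 : Fin n) + d = (1 + d) + 1 from by ring] at h2
  have hD : g ((1 + d) + 1) - g (1 + d) = -1 := by
    first | linear_combination h1 - h2 | linear_combination h2 - h1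
  rcases delta hn hg1 hg2 hg3 hg4 hgid (1 + d) with ⟨hy, hD'⟩ | ⟨hy, hD'⟩ | ⟨hy, hD'⟩ |
    ⟨hy, hD'⟩ | ⟨hy, hD'⟩ | ⟨hy, hD'⟩ | hD'
  · exact lit_contra hn 2 (by
      push_cast
      first
      | linear_combination hD - hD'
      | linear_combination hD' - hD)
  · -- n = 6, d = 0
    have hd : d = 0 := by linear_combination hy
    have e0 := E 0
    rw [hg0, show -(0 : Fin n) + d = 0 from by linear_combination hd, hg0] at e0
    have e1 := E 1
    rw [hg1, show -(1 : Fin n) + d = -1 from by linear_combination hd, hg4] at e1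
    exact lit_contra hn 5 (by
      push_cast
      first
      | linear_combination e1 - e0
      | linear_combination e0 - e1)
  · -- n = 6, d = -5
    have hd : d = -5 := by linear_combination hy
    have h6 : (6 : Fin n) = 0 := by
      first
      | linear_combination hD - hD'
      | linear_combination hD' - hD
    have e0 := E 0
    have harg0 : -(0 : Fin n) + d = 1 := by
      first
      | linear_combination hd - h6
      | linear_combination hd + h6
    rw [hg0, harg0, hg1] at e0
    have e2 := E 2
    have harg2 : -(2 : Fin n) + d = -1 := by
      first
      | linear_combination hd - h6
      | linear_combination hd + h6
    rw [hg2', harg2, hg4] at e2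
    exact lit_contra hn 3 (by
      push_cast
      first
      | linear_combination e0 - e2
      | linear_combination e2 - e0)
  · exact lit_contra hn 1 (by
      push_cast
      first
      | linear_combination hD - hD'
      | linear_combination hD' - hD)
  · -- d = -3
    have hd : d = -3 := by linear_combination hy
    have e0 := E 0
    rw [hg0, show -(0 : Fin n) + d = -3 from by linear_combination hd, hg2] at e0
    have e2 := E 2
    by_cases h6 : (6 : Fin n) = 0
    · have harg2 : -(2 : Fin n) + d = 1 := by
        first
        | linear_combination hd - h6
        | linear_combination hd + h6
      rw [hg2', harg2, hg1] at e2
      exact lit_contra hn 2 (by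
        push_cast
        first
        | linear_combination e2 - e0
        | linear_combination e0 - e2)
    · rw [hg2', show -(2 : Fin n) + d = -5 from by linear_combination hd] at e2
      rw [hgid (-5) (fun h => h6 (by first
        | linear_combination h
        | linear_combination -h))
        (lit_ne hn 2).symm (lit_ne hn 3).symm (lit_ne hn 4).symm] at e2
      exact lit_contra hn 4 (by
        push_cast
        first
        | linear_combination e2 - e0
        | linear_combination e0 - e2)
  · exact lit_contra hn 3 (by
      push_cast
      first
      | linear_combination hD - hD'
      | linear_combination hD' - hD)
  · exact lit_contra hn 2 (by
      push_cast
      first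
      | linear_combination hD - hD'
      | linear_combination hD' - hD)

include hn hg1 hg2 hg3 hg4 hgid in
lemma main_aux {a b : Equiv.Perm (Fin n)}
    (ha : ∀ x, a x = x + 1) (hb : ∀ x, b x = -x - 1) :
    (Subgroup.closure {a, b}) ⊓
      (Subgroup.closure {a, b}).map (MulAut.conj g).toMonoidHom = ⊥ := by
  rw [eq_bot_iff]
  intro h hh
  rw [Subgroup.mem_inf] at hh
  obtain ⟨hH, hmap⟩ := hh
  rw [Subgroup.mem_map] at hmap
  obtain ⟨k, hkH, hk⟩ := hmap
  have hk' : g * k * g⁻¹ = h := hk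
  have hE : ∀ x, h (g x) = g (k x) := by
    intro x
    rw [← hk']
    simp [Equiv.Perm.mul_apply]
  obtain ⟨c, hc⟩ := affine_of_mem ha hb hH
  obtain ⟨d, hd⟩ := affine_of_mem ha hb hkH
  rw [Subgroup.mem_bot]
  rcases hc with hc | hc <;> rcases hd with hd | hd
  · have E : ∀ x, g x + c = g (x + d) := fun x => by rw [← hd x, ← hE x, hc (g x)]
    have hc0 : c = 0 := caseE1 hn hg1 hg2 hg3 hg4 hgid E
    exact Equiv.ext fun x => by simp [hc x, hc0]
  · have E : ∀ x, g x + c = g (-x + d) := fun x => by rw [← hd x, ← hE x, hc (g x)]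
    exact (caseE2 hn hg1 hg2 hg3 hg4 hgid E).elim
  · have E : ∀ x, -(g x) + c = g (x + d) := fun x => by rw [← hd x, ← hE x, hc (g x)]
    exact (caseE3 hn hg1 hg2 hg3 hg4 hgid E).elim
  · have E : ∀ x, -(g x) + c = g (-x + d) := fun x => by rw [← hd x, ← hE x, hc (g x)]
    exact (caseE4 hn hg1 hg2 hg3 hg4 hgid E).elim

end G

theorem revPerm_eq (m : ℕ) (x : Fin (m+1)) : Fin.revPerm x = -x - 1 := by
  rw [Fin.revPerm_apply, ← Fin.last_sub]
  have h : Fin.last m = -1 := by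
    rcases Nat.eq_zero_or_pos m with h | h
    · subst h; rfl
    · rw [Fin.ext_iff, Fin.val_last, Fin.neg_def, Fin.val_one', Fin.val_mk,
        Nat.mod_eq_of_lt (show 1 < m + 1 by omega), Nat.mod_eq_of_lt (by omega)]
      omega
  rw [h]; ring

end Dih19

/-- Let `n > 5` and let `H = D_{2n} ≤ S_n` be the dihedral
subgroup of order `2n` generated by the `n`-cycle `a = (1,2,…,n)`
(`finRotate n` on `Fin n`) and the reversal `b = (1,n)(2,n−1)⋯`
(`Fin.revPerm`).  With `g = (2,n−2)(n−1,n)` (zero-based: the product of the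
swaps `(1, n−3)` and `(n−2, n−1)`), the subgroup `H` and its conjugate
`H^g = gHg⁻¹` intersect trivially. -/
theorem dihedral_conjugate_trivial_intersection (n : ℕ) (hn : 5 < n) :
    (Subgroup.closure {finRotate n, (Fin.revPerm : Equiv.Perm (Fin n))}) ⊓
      (Subgroup.closure {finRotate n, (Fin.revPerm : Equiv.Perm (Fin n))}).map
        (MulAut.conj
          (Equiv.swap (⟨1, by omega⟩ : Fin n) ⟨n - 3, by omega⟩ *
            Equiv.swap (⟨n - 2, by omega⟩ : Fin n) ⟨n - 1, by omega⟩)).toMonoidHom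
      = ⊥ := by
  haveI : NeZero n := ⟨by omega⟩
  obtain ⟨m, rfl⟩ : ∃ m, n = m + 1 := ⟨n - 1, by omega⟩
  simp only [Dih19.mk_cast]
  rw [Dih19.cast_n_sub 3 (by omega), Dih19.cast_n_sub 2 (by omega),
    Dih19.cast_n_sub 1 (by omega)]
  push_cast
  have ha : ∀ x : Fin (m+1), finRotate (m+1) x = x + 1 := finRotate_succ_apply
  have hb : ∀ x : Fin (m+1), Fin.revPerm x = -x - 1 := Dih19.revPerm_eq m
  refine Dih19.main_aux hn ?_ ?_ ?_ ?_ ?_ ha hb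
  · rw [Equiv.Perm.mul_apply,
      show Equiv.swap (-2 : Fin (m+1)) (-1) 1 = 1 from
        Equiv.swap_apply_of_ne_of_ne (Dih19.lit_ne hn 3) (Dih19.lit_ne hn 2),
      Equiv.swap_apply_left]
  · rw [Equiv.Perm.mul_apply,
      show Equiv.swap (-2 : Fin (m+1)) (-1) (-3) = -3 from
        Equiv.swap_apply_of_ne_of_ne (Dih19.lit_ne hn 1).symm (Dih19.lit_ne hn 2).symm,
      Equiv.swap_apply_right]
  · rw [Equiv.Perm.mul_apply,
      show Equiv.swap (-2 : Fin (m+1)) (-1) (-2) = -1 from Equiv.swap_apply_left _ _,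
      show Equiv.swap (1 : Fin (m+1)) (-3) (-1) = -1 from
        Equiv.swap_apply_of_ne_of_ne (Dih19.lit_ne hn 2).symm (Dih19.lit_ne hn 2)]
  · rw [Equiv.Perm.mul_apply,
      show Equiv.swap (-2 : Fin (m+1)) (-1) (-1) = -2 from Equiv.swap_apply_right _ _,
      show Equiv.swap (1 : Fin (m+1)) (-3) (-2) = -2 from
        Equiv.swap_apply_of_ne_of_ne (Dih19.lit_ne hn 3).symm (Dih19.lit_ne hn 1)]
  · intro y hy1 hy3 hy2 hym1
    rw [Equiv.Perm.mul_apply,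
      show Equiv.swap (-2 : Fin (m+1)) (-1) y = y from
        Equiv.swap_apply_of_ne_of_ne hy2 hym1,
      show Equiv.swap (1 : Fin (m+1)) (-3) y = y from
        Equiv.swap_apply_of_ne_of_ne hy1 hy3]
end
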